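/- arXiv:1209.5095 — 5 statements merged into one kernel-verified Lean document; each statement's English description precedes it below -/
import Mathlib

section
/- Let Q be a closed cube in ℝⁿ and let Q₁ be an open neighbourhood of Q. Let σ : Q₁ → ℝ be twice differentiable with all second partial derivatives uniformly bounded on Q₁, and suppose |σ(x)| < 1 for all x ∈ Q. Then there exists a constant C₁ > 0, independent of a, such that for every a with 0 < a < 1/2 one has ∫_Q ‖∇σ(x)‖ · 𝟙{|σ(x)| < a} dx < C₁ · √a (the integral taken with respect to Lebesgue measure on Q). -/
open MeasureTheory Set

noncomputable def chia (a t : ℝ) : ℝ := max 0 (min 1 (2 - |t|/a))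

lemma chia_cont (a : ℝ) : Continuous (chia a) :=
  continuous_const.max (continuous_const.min (continuous_const.sub (continuous_abs.div_const a)))

lemma chia_nonneg (a t : ℝ) : 0 ≤ chia a t := le_max_left _ _

lemma chia_le_one (a t : ℝ) : chia a t ≤ 1 := max_le zero_le_one (min_le_left _ _)

lemma chia_eq_one {a t : ℝ} (ha : 0 < a) (h : |t| ≤ a) : chia a t = 1 := by
  have h1 : |t|/a ≤ 1 := by rw [div_le_one ha]; exact h
  have : (1:ℝ) ≤ 2 - |t|/a := by linarith
  rw [chia, min_eq_left this, max_eq_right zero_le_one]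

lemma chia_eq_zero {a t : ℝ} (ha : 0 < a) (h : 2*a ≤ |t|) : chia a t = 0 := by
  have h1 : (2:ℝ) ≤ |t|/a := by rw [le_div_iff₀ ha]; linarith
  have : min 1 (2 - |t|/a) ≤ 0 := min_le_of_right_le (by linarith)
  rw [chia, max_eq_left this]

noncomputable def Fa (a s : ℝ) : ℝ := ∫ t in (0:ℝ)..s, chia a t

lemma Fa_hasDerivAt (a s : ℝ) : HasDerivAt (Fa a) (chia a s) s :=
  ((chia_cont a).integral_hasStrictDerivAt 0 s).hasDerivAt

lemma Fa_cont (a : ℝ) : Continuous (Fa a) :=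
  continuous_iff_continuousAt.2 fun s => (Fa_hasDerivAt a s).continuousAt

lemma Fa_le_aux {a : ℝ} (ha : 0 < a) {u v : ℝ} (hu : 0 ≤ u) (huv : u ≤ v)
    (hv : v ≤ 2*a) : (∫ t in u..v, chia a t) ≤ 2*a := by
  calc (∫ t in u..v, chia a t) ≤ ∫ _t in u..v, (1:ℝ) := by
        refine intervalIntegral.integral_mono_on huv
          ((chia_cont a).intervalIntegrable _ _) (intervalIntegrable_const)
          (fun t _ => chia_le_one a t)
    _ = v - u := by simp
    _ ≤ 2*a := by linarith

lemma Fa_le_aux' {a : ℝ} (ha : 0 < a) {u v : ℝ} (hu : 0 ≤ u) (huv : u ≤ v) :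
    (∫ t in u..v, chia a t) ≤ 2*a := by
  rcases le_total v (2*a) with h | h
  · exact Fa_le_aux ha hu huv h
  · have hu2 : u ≤ 2*a ∨ 2*a ≤ u := le_total _ _
    rcases hu2 with hu2 | hu2
    · have hsplit : (∫ t in u..(2*a), chia a t) + (∫ t in (2*a)..v, chia a t)
          = ∫ t in u..v, chia a t :=
        intervalIntegral.integral_add_adjacent_intervals
          ((chia_cont a).intervalIntegrable _ _) ((chia_cont a).intervalIntegrable _ _)
      have hz : (∫ t in (2*a)..v, chia a t) = 0 := by
        rw [intervalIntegral.integral_congr (g := fun _ => (0:ℝ))]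
        · simp
        · intro t ht
          rw [uIcc_of_le h] at ht
          exact chia_eq_zero ha (le_trans ht.1 (le_abs_self t))
      rw [← hsplit, hz, add_zero]
      exact Fa_le_aux ha hu hu2 le_rfl
    · have hz : (∫ t in u..v, chia a t) = 0 := by
        rw [intervalIntegral.integral_congr (g := fun _ => (0:ℝ))]
        · simp
        · intro t ht
          rw [uIcc_of_le huv] at ht
          exact chia_eq_zero ha (le_trans (le_trans hu2 ht.1) (le_abs_self t))
      rw [hz]; positivity

lemma chia_even (a t : ℝ) : chia a (-t) = chia a t := by rw [chia, chia, abs_neg]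

lemma Fa_abs_le {a : ℝ} (ha : 0 < a) (s : ℝ) : |Fa a s| ≤ 2*a := by
  rcases le_total 0 s with hs | hs
  · have h1 : 0 ≤ Fa a s :=
      intervalIntegral.integral_nonneg hs (fun t _ => chia_nonneg a t)
    have h2 : Fa a s ≤ 2*a := Fa_le_aux' ha le_rfl hs
    rw [abs_of_nonneg h1]; exact h2
  · have hrev : Fa a s = -(∫ t in s..(0:ℝ), chia a t) := by
      rw [Fa, intervalIntegral.integral_symm]
    have hsub : (∫ t in s..(0:ℝ), chia a t) = ∫ t in (0:ℝ)..(-s), chia a t := by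
      have h := intervalIntegral.integral_comp_neg (a := 0) (b := -s) (chia a)
      simp only [neg_neg, neg_zero, chia_even] at h
      exact h.symm
    have h1 : 0 ≤ (∫ t in s..(0:ℝ), chia a t) := by
      rw [hsub]; exact intervalIntegral.integral_nonneg (by linarith) (fun t _ => chia_nonneg a t)
    have h2 : (∫ t in s..(0:ℝ), chia a t) ≤ 2*a := by
      rw [hsub]; exact Fa_le_aux' ha le_rfl (by linarith)
    rw [hrev, abs_neg, abs_of_nonneg h1]; exact h2

noncomputable def ee (n : ℕ) : (Fin n → ℝ) →L[ℝ] EuclideanSpace ℝ (Fin n) :=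
  ((EuclideanSpace.equiv (Fin n) ℝ).symm :
    (Fin n → ℝ) ≃L[ℝ] EuclideanSpace ℝ (Fin n)).toContinuousLinearMap

lemma ee_single (n : ℕ) (i : Fin n) :
    ee n (Pi.single i 1) = EuclideanSpace.single i (1:ℝ) := rfl

set_option maxHeartbeats 2000000 in
lemma energy_bound {m : ℕ} {d : ℝ} (hd : 0 < d) (lo hi : Fin (m+1) → ℝ)
    (hwidth : ∀ j, hi j - lo j = 2*d)
    (Q₁ : Set (EuclideanSpace ℝ (Fin (m+1))))
    (hsub : ∀ y ∈ Icc lo hi, ee (m+1) y ∈ Q₁)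
    (σ : EuclideanSpace ℝ (Fin (m+1)) → ℝ)
    (hσdiff : ∀ x ∈ Q₁, DifferentiableAt ℝ σ x)
    (hσdiff2 : ∀ x ∈ Q₁, DifferentiableAt ℝ (fderiv ℝ σ) x)
    (M G : ℝ) (hM : ∀ x ∈ Q₁, ‖fderiv ℝ (fderiv ℝ σ) x‖ ≤ M)
    (hG : ∀ y ∈ Icc lo hi, ‖fderiv ℝ σ (ee (m+1) y)‖ ≤ G)
    (a : ℝ) (ha : 0 < a) :
    (∫ y in Icc lo hi, chia a (σ (ee (m+1) y)) *
        ∑ i, (fderiv ℝ σ (ee (m+1) y) (EuclideanSpace.single i 1))^2)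
      ≤ (4*(m+1)*G*(2*d)^m + 2*(m+1)*M*(2*d)^(m+1)) * a := by
  have hle : lo ≤ hi := fun j => by have := hwidth j; linarith
  have hG0 : 0 ≤ G := le_trans (norm_nonneg _) (hG lo ⟨le_rfl, hle⟩)
  have hM0 : 0 ≤ M := le_trans (ContinuousLinearMap.opNorm_nonneg _) (hM _ (hsub lo ⟨le_rfl, hle⟩))
  -- abbreviations
  set ee' : (Fin (m+1) → ℝ) →L[ℝ] EuclideanSpace ℝ (Fin (m+1)) := ee (m+1) with hee'
  set A : EuclideanSpace ℝ (Fin (m+1)) → EuclideanSpace ℝ (Fin (m+1)) →L[ℝ] ℝ :=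
    fderiv ℝ σ with hA
  set B := fderiv ℝ (fderiv ℝ σ) with hB
  set eps : Fin (m+1) → EuclideanSpace ℝ (Fin (m+1)) :=
    fun i => EuclideanSpace.single i (1:ℝ) with heps
  -- continuity facts
  have hcσ : ContinuousOn (fun y => σ (ee' y)) (Icc lo hi) := fun y hy =>
    (((hσdiff _ (hsub y hy)).continuousAt).comp ee'.continuous.continuousAt).continuousWithinAt
  have hcA : ContinuousOn (fun y => A (ee' y)) (Icc lo hi) := fun y hy =>
    (((hσdiff2 _ (hsub y hy)).continuousAt).comp ee'.continuous.continuousAt).continuousWithinAt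
  -- measurability facts
  have hmA : Measurable (fun y : Fin (m+1) → ℝ => A (ee' y)) :=
    (measurable_fderiv ℝ σ).comp ee'.continuous.measurable
  have hmB : Measurable (fun y : Fin (m+1) → ℝ => B (ee' y)) :=
    (measurable_fderiv ℝ (fderiv ℝ σ)).comp ee'.continuous.measurable
  have hmσ : AEMeasurable (fun y => σ (ee' y)) (volume.restrict (Icc lo hi)) :=
    hcσ.aemeasurable measurableSet_Icc
  -- the vector field and its derivative
  set f : Fin (m+1) → (Fin (m+1) → ℝ) → ℝ :=
    fun i y => Fa a (σ (ee' y)) * A (ee' y) (eps i) with hfdef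
  set f' : Fin (m+1) → (Fin (m+1) → ℝ) → (Fin (m+1) → ℝ) →L[ℝ] ℝ := fun i y =>
    Fa a (σ (ee' y)) •
        ((ContinuousLinearMap.apply ℝ ℝ (eps i)).comp ((B (ee' y)).comp ee')) +
      (A (ee' y) (eps i)) • (chia a (σ (ee' y)) • ((A (ee' y)).comp ee')) with hf'def
  have Hc : ∀ i, ContinuousOn (f i) (Icc lo hi) := by
    intro i
    exact ((Fa_cont a).comp_continuousOn hcσ).mul
      (((ContinuousLinearMap.apply ℝ ℝ (eps i)).continuous.comp_continuousOn hcA))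
  have Hd : ∀ y ∈ (Set.pi univ fun i => Ioo (lo i) (hi i)) \ (∅ : Set (Fin (m+1) → ℝ)),
      ∀ i, HasFDerivAt (f i) (f' i y) y := by
    rintro y ⟨hy, -⟩ i
    have hyIcc : y ∈ Icc lo hi := by
      rw [mem_Icc]
      constructor <;> intro j <;> have := hy j (mem_univ j)
      · exact (this.1).le
      · exact (this.2).le
    have hy1 : ee' y ∈ Q₁ := hsub y hyIcc
    have hde : HasFDerivAt (fun y : Fin (m+1) → ℝ => ee' y) ee' y :=
      ee'.hasFDerivAt
    have h1 : HasFDerivAt (fun y => σ (ee' y)) ((A (ee' y)).comp ee') y :=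
      ((hσdiff _ hy1).hasFDerivAt).comp y hde
    have hc : HasFDerivAt (fun y => Fa a (σ (ee' y)))
        (chia a (σ (ee' y)) • ((A (ee' y)).comp ee')) y :=
      ((Fa_hasDerivAt a (σ (ee' y))).comp_hasFDerivAt y h1 :)
    have h2 : HasFDerivAt (fun y => A (ee' y)) ((B (ee' y)).comp ee') y :=
      ((hσdiff2 _ hy1).hasFDerivAt).comp y hde
    have hd' : HasFDerivAt (fun y => A (ee' y) (eps i))
        ((ContinuousLinearMap.apply ℝ ℝ (eps i)).comp ((B (ee' y)).comp ee')) y :=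
      ((ContinuousLinearMap.apply ℝ ℝ (eps i)).hasFDerivAt).comp y h2
    exact hc.mul hd'
  -- pointwise divergence formula
  have hsingle : ∀ i : Fin (m+1), ee' (Pi.single i 1) = eps i := fun i => rfl
  have hdivext : ∀ y, (∑ i, f' i y (Pi.single i 1)) =
      Fa a (σ (ee' y)) * (∑ i, B (ee' y) (eps i) (eps i)) +
        chia a (σ (ee' y)) * (∑ i, (A (ee' y) (eps i))^2) := by
    intro y
    simp only [hf'def, ContinuousLinearMap.add_apply, ContinuousLinearMap.smul_apply,
      ContinuousLinearMap.coe_comp', Function.comp_apply, ContinuousLinearMap.apply_apply,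
      smul_eq_mul, hsingle, Finset.sum_add_distrib, Finset.mul_sum]
    congr 1
    exact Finset.sum_congr rfl fun i _ => by ring
  -- pointwise bounds
  have hFb : ∀ s, |Fa a s| ≤ 2*a := Fa_abs_le ha
  have hAb : ∀ y ∈ Icc lo hi, ∀ i, |A (ee' y) (eps i)| ≤ G := by
    intro y hy i
    have h1 := (A (ee' y)).le_opNorm (eps i)
    have h2 : ‖eps i‖ = 1 := by simp [heps]
    rw [← Real.norm_eq_abs]
    calc ‖A (ee' y) (eps i)‖ ≤ ‖A (ee' y)‖ * ‖eps i‖ := h1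
      _ ≤ G := by rw [h2, mul_one]; exact hG y hy
  have hBb : ∀ y ∈ Icc lo hi, ∀ i, |B (ee' y) (eps i) (eps i)| ≤ M := by
    intro y hy i
    have h1 := (B (ee' y) (eps i)).le_opNorm (eps i)
    have h2 := (B (ee' y)).le_opNorm (eps i)
    have h3 : ‖eps i‖ = 1 := by simp [heps]
    have h4 := hM (ee' y) (hsub y hy)
    rw [← Real.norm_eq_abs]
    rw [h3, mul_one] at h1 h2
    exact h1.trans (h2.trans h4)
  have hTb : ∀ y ∈ Icc lo hi, |∑ i, B (ee' y) (eps i) (eps i)| ≤ (m+1)*M := by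
    intro y hy
    calc |∑ i, B (ee' y) (eps i) (eps i)| ≤ ∑ i, |B (ee' y) (eps i) (eps i)| :=
        Finset.abs_sum_le_sum_abs _ _
      _ ≤ ∑ _i : Fin (m+1), M := Finset.sum_le_sum fun i _ => hBb y hy i
      _ = (m+1)*M := by
        rw [Finset.sum_const, Finset.card_univ, Fintype.card_fin, nsmul_eq_mul]
        push_cast; ring
  have hSb : ∀ y ∈ Icc lo hi, |∑ i, (A (ee' y) (eps i))^2| ≤ (m+1)*G^2 := by
    intro y hy
    calc |∑ i, (A (ee' y) (eps i))^2| ≤ ∑ i, |(A (ee' y) (eps i))^2| :=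
        Finset.abs_sum_le_sum_abs _ _
      _ ≤ ∑ _i : Fin (m+1), G^2 := by
        refine Finset.sum_le_sum fun i _ => ?_
        rw [abs_pow, sq_abs]
        have h := abs_le.1 (hAb y hy i)
        exact sq_le_sq' h.1 h.2
      _ = (m+1)*G^2 := by
        rw [Finset.sum_const, Finset.card_univ, Fintype.card_fin, nsmul_eq_mul]
        push_cast; ring
  -- measurability of pieces
  have hmBi : ∀ i, AEMeasurable (fun y => B (ee' y) (eps i) (eps i))
      (volume.restrict (Icc lo hi)) := by
    intro i
    exact (((ContinuousLinearMap.apply ℝ ℝ (eps i)).continuous.comp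
      (ContinuousLinearMap.apply ℝ (EuclideanSpace ℝ (Fin (m+1)) →L[ℝ] ℝ)
        (eps i)).continuous).measurable.comp hmB).aemeasurable
  have hmFT : AEMeasurable
      (fun y => Fa a (σ (ee' y)) * (∑ i, B (ee' y) (eps i) (eps i)))
      (volume.restrict (Icc lo hi)) :=
    ((Fa_cont a).measurable.comp_aemeasurable hmσ).mul (Finset.aemeasurable_fun_sum _ fun i _ => hmBi i)
  have hcS : ContinuousOn (fun y => (∑ i, (A (ee' y) (eps i))^2)) (Icc lo hi) := by
    refine continuousOn_finset_sum _ fun i _ => ?_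
    exact (((ContinuousLinearMap.apply ℝ ℝ (eps i)).continuous.comp_continuousOn hcA)).pow 2
  have hcchiS : ContinuousOn
      (fun y => chia a (σ (ee' y)) * (∑ i, (A (ee' y) (eps i))^2)) (Icc lo hi) :=
    ((chia_cont a).comp_continuousOn hcσ).mul hcS
  -- integrability
  have hvolIcc : volume (Icc lo hi) < ⊤ := isCompact_Icc.measure_lt_top
  have hIchiS : IntegrableOn
      (fun y => chia a (σ (ee' y)) * (∑ i, (A (ee' y) (eps i))^2)) (Icc lo hi) volume :=
    hcchiS.integrableOn_compact isCompact_Icc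
  have hIFT : IntegrableOn
      (fun y => Fa a (σ (ee' y)) * (∑ i, B (ee' y) (eps i) (eps i))) (Icc lo hi) volume := by
    refine ⟨hmFT.aestronglyMeasurable, HasFiniteIntegral.restrict_of_bounded
      (C := 2*a*((m+1)*M)) hvolIcc ?_⟩
    rw [ae_restrict_iff' measurableSet_Icc]
    filter_upwards with y hy
    rw [Real.norm_eq_abs, abs_mul]
    exact mul_le_mul (hFb _) (hTb y hy) (abs_nonneg _) (by positivity)
  have Hi : IntegrableOn (fun y => ∑ i, f' i y (Pi.single i 1)) (Icc lo hi) volume := by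
    have heq : (fun y => ∑ i, f' i y (Pi.single i 1)) =
        (fun y => Fa a (σ (ee' y)) * (∑ i, B (ee' y) (eps i) (eps i)) +
          chia a (σ (ee' y)) * (∑ i, (A (ee' y) (eps i))^2)) := funext hdivext
    rw [heq]
    exact hIFT.add hIchiS
  -- divergence theorem
  have hdiv := MeasureTheory.integral_divergence_of_hasFDerivAt_off_countable'
    lo hi hle f f' ∅ countable_empty Hc Hd Hi
  -- face bounds
  have hface : ∀ (i : Fin (m+1)) (c : ℝ), c ∈ Icc (lo i) (hi i) →
      |∫ x in Icc (lo ∘ i.succAbove) (hi ∘ i.succAbove), f i (i.insertNth c x)| ≤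
        2*a*G*(2*d)^m := by
    intro i c hc
    have hle' : (lo ∘ i.succAbove) ≤ (hi ∘ i.succAbove) := fun j => hle _
    have hvol : (volume (Icc (lo ∘ i.succAbove) (hi ∘ i.succAbove))).toReal = (2*d)^m := by
      rw [Real.volume_Icc_pi_toReal hle']
      have hw' : ∀ j : Fin m, (hi ∘ i.succAbove) j - (lo ∘ i.succAbove) j = 2*d :=
        fun j => hwidth _
      rw [Finset.prod_congr rfl (fun j _ => hw' j), Finset.prod_const,
        Finset.card_univ, Fintype.card_fin]
    have hmapsto : ∀ w ∈ Icc (lo ∘ i.succAbove) (hi ∘ i.succAbove),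
        i.insertNth c w ∈ Icc lo hi := by
      intro w hw
      exact (Fin.insertNth_mem_Icc).2 ⟨hc, hw⟩
    have hcont : Continuous (fun w : Fin m → ℝ => (i.insertNth c w : Fin (m+1) → ℝ)) :=
      Continuous.finInsertNth (A := fun _ : Fin (m+1) => ℝ) i
        (continuous_const : Continuous fun _ : Fin m → ℝ => c) continuous_id
    have haesm : AEStronglyMeasurable (fun w => f i (i.insertNth c w))
        (volume.restrict (Icc (lo ∘ i.succAbove) (hi ∘ i.succAbove))) := by
      refine ContinuousOn.aestronglyMeasurable ?_ measurableSet_Icc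
      exact (Hc i).comp hcont.continuousOn hmapsto
    have hb : ∀ w ∈ Icc (lo ∘ i.succAbove) (hi ∘ i.succAbove),
        ‖f i (i.insertNth c w)‖ ≤ 2*a*G := by
      intro w hw
      have hz := hmapsto w hw
      rw [Real.norm_eq_abs, hfdef, abs_mul]
      exact mul_le_mul (hFb _) (hAb _ hz i) (abs_nonneg _) (by positivity)
    have := norm_setIntegral_le_of_norm_le_const (C := 2*a*G)
      (isCompact_Icc.measure_lt_top (μ := volume)) hb
    rw [measureReal_def, hvol] at this
    rw [← Real.norm_eq_abs]
    calc ‖∫ x in Icc (lo ∘ i.succAbove) (hi ∘ i.succAbove), f i (i.insertNth c x)‖ ≤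
        2*a*G * (2*d)^m := this
      _ = 2*a*G*(2*d)^m := by ring
  have hbdy : |∑ i : Fin (m+1),
      ((∫ x in Icc (lo ∘ i.succAbove) (hi ∘ i.succAbove), f i (i.insertNth (hi i) x)) -
        ∫ x in Icc (lo ∘ i.succAbove) (hi ∘ i.succAbove), f i (i.insertNth (lo i) x))| ≤
      (m+1) * (4*a*G*(2*d)^m) := by
    calc |∑ i : Fin (m+1), ((∫ x in Icc (lo ∘ i.succAbove) (hi ∘ i.succAbove),
            f i (i.insertNth (hi i) x)) -
          ∫ x in Icc (lo ∘ i.succAbove) (hi ∘ i.succAbove), f i (i.insertNth (lo i) x))| ≤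
        ∑ i : Fin (m+1), |(∫ x in Icc (lo ∘ i.succAbove) (hi ∘ i.succAbove),
            f i (i.insertNth (hi i) x)) -
          ∫ x in Icc (lo ∘ i.succAbove) (hi ∘ i.succAbove), f i (i.insertNth (lo i) x)| :=
        Finset.abs_sum_le_sum_abs _ _
      _ ≤ ∑ _i : Fin (m+1), (4*a*G*(2*d)^m) := by
        refine Finset.sum_le_sum fun i _ => ?_
        have h1 := hface i (hi i) ⟨hle i, le_rfl⟩
        have h2 := hface i (lo i) ⟨le_rfl, hle i⟩
        have h3 := abs_sub (∫ x in Icc (lo ∘ i.succAbove) (hi ∘ i.succAbove),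
            f i (i.insertNth (hi i) x)) (∫ x in Icc (lo ∘ i.succAbove) (hi ∘ i.succAbove),
            f i (i.insertNth (lo i) x))
        linarith
      _ = (m+1) * (4*a*G*(2*d)^m) := by
        rw [Finset.sum_const, Finset.card_univ, Fintype.card_fin, nsmul_eq_mul]
        push_cast; ring
  -- bound on the Fa * T integral
  have hvolbox : (volume (Icc lo hi)).toReal = (2*d)^(m+1) := by
    rw [Real.volume_Icc_pi_toReal hle]
    rw [Finset.prod_congr rfl (fun j _ => hwidth j), Finset.prod_const,
      Finset.card_univ, Fintype.card_fin]
  have hFTb : |∫ y in Icc lo hi, Fa a (σ (ee' y)) * (∑ i, B (ee' y) (eps i) (eps i))| ≤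
      2*a*((m+1)*M) * (2*d)^(m+1) := by
    have hb : ∀ y ∈ Icc lo hi,
        ‖Fa a (σ (ee' y)) * (∑ i, B (ee' y) (eps i) (eps i))‖ ≤ 2*a*((m+1)*M) := by
      intro y hy
      rw [Real.norm_eq_abs, abs_mul]
      exact mul_le_mul (hFb _) (hTb y hy) (abs_nonneg _) (by positivity)
    have := norm_setIntegral_le_of_norm_le_const (C := 2*a*((m+1)*M))
      hvolIcc hb
    rw [measureReal_def, hvolbox] at this
    rw [← Real.norm_eq_abs]
    exact this
  -- split the divergence integral
  have hsum : (∫ y in Icc lo hi, ∑ i, f' i y (Pi.single i 1)) =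
      (∫ y in Icc lo hi, Fa a (σ (ee' y)) * (∑ i, B (ee' y) (eps i) (eps i))) +
        ∫ y in Icc lo hi, chia a (σ (ee' y)) * (∑ i, (A (ee' y) (eps i))^2) := by
    simp only [hdivext]
    exact integral_add hIFT hIchiS
  -- conclude
  have hD : |∫ y in Icc lo hi, ∑ i, f' i y (Pi.single i 1)| ≤ (m+1) * (4*a*G*(2*d)^m) := by
    rw [hdiv]; exact hbdy
  have h5 := le_abs_self (∫ y in Icc lo hi, ∑ i, f' i y (Pi.single i 1))
  have h6 := neg_le_abs (∫ y in Icc lo hi, Fa a (σ (ee' y)) *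
    (∑ i, B (ee' y) (eps i) (eps i)))
  have hgoal : (∫ y in Icc lo hi, chia a (σ (ee' y)) * (∑ i, (A (ee' y) (eps i))^2)) ≤
      (m+1) * (4*a*G*(2*d)^m) + 2*a*((m+1)*M) * (2*d)^(m+1) := by
    linarith
  calc (∫ y in Icc lo hi, chia a (σ (ee' y)) * (∑ i, (A (ee' y) (eps i))^2)) ≤
      (m+1) * (4*a*G*(2*d)^m) + 2*a*((m+1)*M) * (2*d)^(m+1) := hgoal
    _ = (4*(m+1)*G*(2*d)^m + 2*(m+1)*M*(2*d)^(m+1)) * a := by push_cast; ring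

lemma amgm {u t : ℝ} (ht : 0 < t) : u ≤ u^2/(2*t) + t/2 := by
  rw [← sub_nonneg]
  have h : u^2/(2*t) + t/2 - u = (u - t)^2 / (2*t) := by field_simp; ring
  rw [h]; positivity

lemma integrableOn_of_bounded'' {α : Type*} [MeasurableSpace α] {μ : Measure α}
    {f : α → ℝ} {s : Set α} (hs : MeasurableSet s) (hvol : μ s < ⊤)
    (hm : AEStronglyMeasurable f (μ.restrict s)) {C : ℝ} (hb : ∀ x ∈ s, ‖f x‖ ≤ C) :
    IntegrableOn f s μ :=
  ⟨hm, HasFiniteIntegral.restrict_of_bounded C hvol ((ae_restrict_iff' hs).2 (ae_of_all _ hb))⟩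

set_option maxHeartbeats 2000000 in
/-- Proposition 1, first estimate: for a twice differentiable function `σ` with uniformly
bounded second derivatives on a neighbourhood `Q₁` of a closed cube `Q`, with `|σ| < 1` on `Q`,
there is a constant `C₁ > 0` independent of `a` such that for all `0 < a < 1/2`,
`∫_Q ‖∇σ‖ · 𝟙{|σ| < a} dμ < C₁ √a`. -/
theorem stmt_0 {n : ℕ} (x₀ : EuclideanSpace ℝ (Fin n)) (d : ℝ) (hd : 0 < d)
    (Q : Set (EuclideanSpace ℝ (Fin n)))
    (hQ : Q = {x : EuclideanSpace ℝ (Fin n) | ∀ j, |x j - x₀ j| ≤ d})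
    (Q₁ : Set (EuclideanSpace ℝ (Fin n))) (hQ₁open : IsOpen Q₁) (hQQ₁ : Q ⊆ Q₁)
    (σ : EuclideanSpace ℝ (Fin n) → ℝ)
    (hσdiff : ∀ x ∈ Q₁, DifferentiableAt ℝ σ x)
    (hσdiff2 : ∀ x ∈ Q₁, DifferentiableAt ℝ (fderiv ℝ σ) x)
    (M : ℝ) (hM : ∀ x ∈ Q₁, ‖fderiv ℝ (fderiv ℝ σ) x‖ ≤ M)
    (hσlt : ∀ x ∈ Q, |σ x| < 1) :
    ∃ C₁ > 0, ∀ a : ℝ, 0 < a → a < 1 / 2 →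
      (∫ x in Q, (if |σ x| < a then ‖gradient σ x‖ else 0)) < C₁ * Real.sqrt a := by
  cases n with
  | zero =>
    refine ⟨1, one_pos, fun a ha _ => ?_⟩
    have hg : ∀ x : EuclideanSpace ℝ (Fin 0), gradient σ x = 0 :=
      fun x => Subsingleton.elim _ _
    have hz : (∫ x in Q, (if |σ x| < a then ‖gradient σ x‖ else 0)) = 0 := by
      simp [hg]
    rw [hz, one_mul]
    exact Real.sqrt_pos.2 ha
  | succ m =>
    set lo : Fin (m+1) → ℝ := fun j => x₀ j - d with hlo
    set hi : Fin (m+1) → ℝ := fun j => x₀ j + d with hhi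
    have hwidth : ∀ j, hi j - lo j = 2*d := fun j => by simp only [hlo, hhi]; ring
    have hle : lo ≤ hi := fun j => by simp only [hlo, hhi]; linarith
    set es := (MeasurableEquiv.toLp 2 (Fin (m+1) → ℝ)).symm with hes
    have hQpre : Q = ⇑es ⁻¹' (Icc lo hi) := by
      rw [hQ]; ext x
      simp only [mem_setOf_eq, mem_preimage, mem_Icc, Pi.le_def]
      constructor
      · intro h
        constructor <;> intro j <;> have hj := abs_le.1 (h j)
        · show x₀ j - d ≤ x j; linarith [hj.1]
        · show x j ≤ x₀ j + d; linarith [hj.2]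
      · rintro ⟨h1, h2⟩ j
        have ha1 : x₀ j - d ≤ x j := h1 j
        have ha2 : x j ≤ x₀ j + d := h2 j
        rw [abs_le]; constructor <;> linarith
    have hQmem : ∀ y ∈ Icc lo hi, ee (m+1) y ∈ Q := by
      intro y hy; rw [hQpre]; exact hy
    have hsub' : ∀ y ∈ Icc lo hi, ee (m+1) y ∈ Q₁ := fun y hy => hQQ₁ (hQmem y hy)
    -- compactness and gradient bound
    have hQcomp : IsCompact Q := by
      rw [hQpre]
      have himg : ⇑es ⁻¹' (Icc lo hi) = (fun y => ee (m+1) y) '' (Icc lo hi) := by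
        ext x
        constructor
        · intro h; exact ⟨es x, h, rfl⟩
        · rintro ⟨y, hy, rfl⟩; exact hy
      rw [himg]
      exact isCompact_Icc.image (ee (m+1)).continuous
    have hAcont : ContinuousOn (fderiv ℝ σ) Q := fun x hx =>
      ((hσdiff2 x (hQQ₁ hx)).continuousAt).continuousWithinAt
    obtain ⟨G₀, hG₀⟩ := hQcomp.exists_bound_of_continuousOn hAcont
    have hx₀Q : x₀ ∈ Q := by rw [hQ]; intro j; simpa using hd.le
    have hM0 : 0 ≤ M := le_trans (ContinuousLinearMap.opNorm_nonneg _) (hM x₀ (hQQ₁ hx₀Q))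
    have hG0' : 0 ≤ G₀ := le_trans (norm_nonneg _) (hG₀ x₀ hx₀Q)
    have hG' : ∀ y ∈ Icc lo hi, ‖fderiv ℝ σ (ee (m+1) y)‖ ≤ G₀ :=
      fun y hy => hG₀ _ (hQmem y hy)
    -- constants
    set Vol : ℝ := (2*d)^(m+1) with hVoldef
    set C₂ : ℝ := 4*(m+1)*G₀*(2*d)^m + 2*(m+1)*M*(2*d)^(m+1) with hC₂def
    have hVol0 : 0 < Vol := by rw [hVoldef]; exact pow_pos (by linarith) _
    have hC₂0 : 0 ≤ C₂ := by
      rw [hC₂def]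
      have h1 : (0:ℝ) ≤ 4*(m+1)*G₀*(2*d)^m :=
        mul_nonneg (mul_nonneg (by positivity) hG0') (by positivity)
      have h2 : (0:ℝ) ≤ 2*(m+1)*M*(2*d)^(m+1) :=
        mul_nonneg (mul_nonneg (by positivity) hM0) (by positivity)
      linarith
    refine ⟨C₂/2 + Vol/2 + 1, by linarith, fun a ha _ => ?_⟩
    have hsa : 0 < Real.sqrt a := Real.sqrt_pos.2 ha
    -- transfer to the pi space
    have htrans : (∫ x in Q, (if |σ x| < a then ‖gradient σ x‖ else 0)) =
        ∫ y in Icc lo hi,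
          (if |σ (ee (m+1) y)| < a then ‖gradient σ (ee (m+1) y)‖ else 0) := by
      rw [hQpre]
      exact (EuclideanSpace.volume_preserving_symm_measurableEquiv_toLp
        (Fin (m+1))).setIntegral_preimage_emb es.measurableEmbedding
        (fun y => if |σ (ee (m+1) y)| < a then ‖gradient σ (ee (m+1) y)‖ else 0)
        (Icc lo hi)
    -- gradient facts
    have hgrad : ∀ x, ‖gradient σ x‖ = ‖fderiv ℝ σ x‖ := fun x => by
      rw [gradient]; exact LinearIsometryEquiv.norm_map _ _
    have hgradj : ∀ (x : EuclideanSpace ℝ (Fin (m+1))) (j : Fin (m+1)),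
        gradient σ x j = fderiv ℝ σ x (EuclideanSpace.single j 1) := by
      intro x j
      have h := @InnerProductSpace.toDual_symm_apply ℝ (EuclideanSpace ℝ (Fin (m+1)))
        _ _ _ _ (EuclideanSpace.single j 1) (fderiv ℝ σ x)
      rw [gradient, ← h, EuclideanSpace.inner_single_right]
      simp
    have hPar : ∀ x : EuclideanSpace ℝ (Fin (m+1)), ‖fderiv ℝ σ x‖^2 =
        ∑ i, (fderiv ℝ σ x (EuclideanSpace.single i 1))^2 := by
      intro x
      rw [← hgrad, EuclideanSpace.norm_eq, Real.sq_sqrt (by positivity)]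
      refine Finset.sum_congr rfl fun i _ => ?_
      rw [Real.norm_eq_abs, sq_abs, hgradj]
    -- the open set where the indicator lives
    set S₀ : Set (Fin (m+1) → ℝ) :=
      {y | ee (m+1) y ∈ Q₁ ∧ |σ (ee (m+1) y)| < a} with hS₀def
    have hS₀open : IsOpen S₀ := by
      have h1 : IsOpen {x : EuclideanSpace ℝ (Fin (m+1)) | x ∈ Q₁ ∧ |σ x| < a} := by
        rw [isOpen_iff_mem_nhds]
        rintro x ⟨hx1, hx2⟩
        have hca : ContinuousAt (fun x => |σ x|) x :=
          continuous_abs.continuousAt.comp (hσdiff x hx1).continuousAt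
        have h2 : {x | |σ x| < a} ∈ nhds x :=
          hca.preimage_mem_nhds (isOpen_Iio.mem_nhds hx2)
        exact Filter.inter_mem (hQ₁open.mem_nhds hx1) h2
      exact h1.preimage (ee (m+1)).continuous
    have hS₀meas : MeasurableSet S₀ := hS₀open.measurableSet
    -- measurable functions
    set gn : (Fin (m+1) → ℝ) → ℝ := fun y => ‖fderiv ℝ σ (ee (m+1) y)‖ with hgndef
    set sq : (Fin (m+1) → ℝ) → ℝ :=
      fun y => ∑ i, (fderiv ℝ σ (ee (m+1) y) (EuclideanSpace.single i 1))^2 with hsqdef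
    have hmA : Measurable (fun y => fderiv ℝ σ (ee (m+1) y)) :=
      (measurable_fderiv ℝ σ).comp (ee (m+1)).continuous.measurable
    have hmgn : Measurable gn := hmA.norm
    have hmsq : Measurable sq := by
      refine Finset.measurable_sum _ fun i _ => ?_
      exact ((ContinuousLinearMap.apply ℝ ℝ
        (EuclideanSpace.single i (1:ℝ))).continuous.measurable.comp hmA).pow_const 2
    have hsqnonneg : ∀ y, 0 ≤ sq y := fun y => Finset.sum_nonneg fun i _ => sq_nonneg _
    have hsqbound : ∀ y ∈ Icc lo hi, sq y ≤ (m+1)*G₀^2 := by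
      intro y hy
      rw [hsqdef]
      calc (∑ i, (fderiv ℝ σ (ee (m+1) y) (EuclideanSpace.single i 1))^2) ≤
          ∑ _i : Fin (m+1), G₀^2 := by
            refine Finset.sum_le_sum fun i _ => ?_
            have h1 := (fderiv ℝ σ (ee (m+1) y)).le_opNorm (EuclideanSpace.single i (1:ℝ))
            have h2 : ‖EuclideanSpace.single i (1:ℝ)‖ = 1 := by simp
            rw [h2, mul_one] at h1
            have h3 := (hG' y hy)
            have h4 : |fderiv ℝ σ (ee (m+1) y) (EuclideanSpace.single i 1)| ≤ G₀ := by
              rw [← Real.norm_eq_abs]; exact h1.trans h3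
            have h5 := abs_le.1 h4
            exact sq_le_sq' h5.1 h5.2
        _ = (m+1)*G₀^2 := by
            rw [Finset.sum_const, Finset.card_univ, Fintype.card_fin, nsmul_eq_mul]
            push_cast; ring
    -- replace the integrand by an indicator
    have h2 : (∫ y in Icc lo hi,
        (if |σ (ee (m+1) y)| < a then ‖gradient σ (ee (m+1) y)‖ else 0)) =
        ∫ y in Icc lo hi, S₀.indicator gn y := by
      refine setIntegral_congr_fun measurableSet_Icc ?_
      intro y hy
      dsimp only
      by_cases h : |σ (ee (m+1) y)| < a
      · rw [if_pos h, indicator_of_mem (show y ∈ S₀ from ⟨hsub' y hy, h⟩)]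
        exact hgrad _
      · rw [if_neg h, indicator_of_notMem (fun hmem => h hmem.2)]
    -- integrability
    have hvolIcc : volume (Icc lo hi) < ⊤ := isCompact_Icc.measure_lt_top
    have hIind : IntegrableOn (S₀.indicator gn) (Icc lo hi) volume := by
      refine integrableOn_of_bounded'' measurableSet_Icc hvolIcc
        ((hmgn.indicator hS₀meas).aestronglyMeasurable) (C := G₀) ?_
      intro y hy
      by_cases hmem : y ∈ S₀
      · rw [indicator_of_mem hmem, Real.norm_eq_abs, abs_of_nonneg (norm_nonneg _)]
        exact hG₀ _ (hQmem y hy)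
      · rw [indicator_of_notMem hmem]; simpa using hG0'
    have hIindsq : IntegrableOn (S₀.indicator sq) (Icc lo hi) volume := by
      refine integrableOn_of_bounded'' measurableSet_Icc hvolIcc
        ((hmsq.indicator hS₀meas).aestronglyMeasurable) (C := (m+1)*G₀^2) ?_
      intro y hy
      by_cases hmem : y ∈ S₀
      · rw [indicator_of_mem hmem, Real.norm_eq_abs, abs_of_nonneg (hsqnonneg y)]
        exact hsqbound y hy
      · rw [indicator_of_notMem hmem]
        simp only [norm_zero]
        positivity
    have hcσ : ContinuousOn (fun y => σ (ee (m+1) y)) (Icc lo hi) := fun y hy =>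
      (((hσdiff _ (hsub' y hy)).continuousAt).comp
        (ee (m+1)).continuous.continuousAt).continuousWithinAt
    have hcA : ContinuousOn (fun y => fderiv ℝ σ (ee (m+1) y)) (Icc lo hi) := fun y hy =>
      (((hσdiff2 _ (hsub' y hy)).continuousAt).comp
        (ee (m+1)).continuous.continuousAt).continuousWithinAt
    have hIchiS : IntegrableOn (fun y => chia a (σ (ee (m+1) y)) * sq y)
        (Icc lo hi) volume := by
      refine (ContinuousOn.mul ((chia_cont a).comp_continuousOn hcσ)
        ?_).integrableOn_compact isCompact_Icc
      refine continuousOn_finset_sum _ fun i _ => ?_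
      exact ((ContinuousLinearMap.apply ℝ ℝ
        (EuclideanSpace.single i (1:ℝ))).continuous.comp_continuousOn hcA).pow 2
    -- step 1 : AM-GM pointwise
    have hstep1 : (∫ y in Icc lo hi, S₀.indicator gn y) ≤
        ∫ y in Icc lo hi, (S₀.indicator sq y / (2*Real.sqrt a) + Real.sqrt a/2) := by
      refine setIntegral_mono_on hIind
        ((hIindsq.div_const _).add (integrableOn_const hvolIcc.ne))
        measurableSet_Icc ?_
      intro y hy
      by_cases hmem : y ∈ S₀
      · rw [indicator_of_mem hmem, indicator_of_mem hmem]
        have hgnsq : sq y = (gn y)^2 := by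
          simp only [hsqdef, hgndef]
          exact (hPar _).symm
        rw [hgnsq]
        exact amgm hsa
      · rw [indicator_of_notMem hmem, indicator_of_notMem hmem]
        simp only [zero_div, zero_add]
        positivity
    -- step 2 : compute the RHS
    have hvolbox : (volume (Icc lo hi)).toReal = Vol := by
      rw [Real.volume_Icc_pi_toReal hle, hVoldef]
      rw [Finset.prod_congr rfl (fun j _ => hwidth j), Finset.prod_const,
        Finset.card_univ, Fintype.card_fin]
    have hstep2 : (∫ y in Icc lo hi, (S₀.indicator sq y / (2*Real.sqrt a) +
        Real.sqrt a/2)) = (∫ y in Icc lo hi, S₀.indicator sq y) / (2*Real.sqrt a) +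
        Real.sqrt a/2 * Vol := by
      rw [integral_add (hIindsq.div_const _) (integrableOn_const hvolIcc.ne),
        integral_div, setIntegral_const, measureReal_def, hvolbox, smul_eq_mul]
      ring
    -- step 3 : energy bound
    have hstep3a : (∫ y in Icc lo hi, S₀.indicator sq y) ≤
        ∫ y in Icc lo hi, chia a (σ (ee (m+1) y)) * sq y := by
      refine setIntegral_mono_on hIindsq hIchiS measurableSet_Icc ?_
      intro y hy
      by_cases hmem : y ∈ S₀
      · rw [indicator_of_mem hmem, chia_eq_one ha (le_of_lt hmem.2), one_mul]
      · rw [indicator_of_notMem hmem]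
        exact mul_nonneg (chia_nonneg _ _) (hsqnonneg y)
    have hstep3b : (∫ y in Icc lo hi, chia a (σ (ee (m+1) y)) * sq y) ≤ C₂ * a := by
      rw [hC₂def]
      exact energy_bound hd lo hi hwidth Q₁ hsub' σ hσdiff hσdiff2 M G₀ hM hG' a ha
    -- conclude
    have hdivle : (∫ y in Icc lo hi, S₀.indicator sq y) / (2*Real.sqrt a) ≤
        (C₂ * a) / (2*Real.sqrt a) :=
      (div_le_div_iff_of_pos_right (by positivity)).2 (hstep3a.trans hstep3b)
    have hCa : (C₂ * a) / (2*Real.sqrt a) = C₂/2 * Real.sqrt a := by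
      have h1 : C₂ * a / (2*Real.sqrt a) = C₂/2 * (a / Real.sqrt a) := by ring
      rw [h1, Real.div_sqrt]
    calc (∫ x in Q, (if |σ x| < a then ‖gradient σ x‖ else 0))
        = ∫ y in Icc lo hi,
            (if |σ (ee (m+1) y)| < a then ‖gradient σ (ee (m+1) y)‖ else 0) := htrans
      _ = ∫ y in Icc lo hi, S₀.indicator gn y := h2
      _ ≤ ∫ y in Icc lo hi, (S₀.indicator sq y / (2*Real.sqrt a) + Real.sqrt a/2) := hstep1
      _ = (∫ y in Icc lo hi, S₀.indicator sq y) / (2*Real.sqrt a) +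
            Real.sqrt a/2 * Vol := hstep2
      _ ≤ C₂/2 * Real.sqrt a + Real.sqrt a/2 * Vol := by
          rw [← hCa]; linarith [hdivle]
      _ < (C₂/2 + Vol/2 + 1) * Real.sqrt a := by nlinarith [hsa]
end

section
/- Let d > 0, c₁ > 0, and let ψ : [0,d] → ℝ be twice differentiable with |ψ(z)| < 1 and |ψ''(z)| < c₁ for all z ∈ [0,d]. Then for every a with 0 < a ≤ 1 one has ∫₀^d |ψ'(z)| · 𝟙{|ψ(z)| < a} dz < (d·(1 + 4c₁) + 2) · √a. In particular ∫₀^d |ψ'(z)| · 𝟙{|ψ(z)| < a} dz < c₂ √a with a constant c₂ depending only on c₁ and d. -/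
open MeasureTheory


lemma key_interval (d c₁ a : ℝ) (hd : 0 < d) (hc₁ : 0 < c₁) (ha0 : 0 < a)
    (ψ ψ' ψ'' : ℝ → ℝ)
    (hψ' : ∀ z ∈ Set.Icc (0 : ℝ) d, HasDerivWithinAt ψ (ψ' z) (Set.Icc 0 d) z)
    (hψ'' : ∀ z ∈ Set.Icc (0 : ℝ) d, HasDerivWithinAt ψ' (ψ'' z) (Set.Icc 0 d) z)
    (hψ''lt : ∀ z ∈ Set.Icc (0 : ℝ) d, |ψ'' z| < c₁)
    (hInt : IntegrableOn (fun z => if |ψ z| < a then |ψ' z| else 0) (Set.Icc 0 d))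
    (u v : ℝ) (hu : 0 ≤ u) (huv : u ≤ v) (hv : v ≤ d)
    (hlen : v - u ≤ Real.sqrt a / (2 * c₁)) :
    (∫ z in Set.Ioc u v, (if |ψ z| < a then |ψ' z| else 0))
      ≤ Real.sqrt a * (v - u) + 2 * a := by
  have hsub : Set.Icc u v ⊆ Set.Icc (0:ℝ) d := Set.Icc_subset_Icc hu hv
  have hsub' : Set.Ioc u v ⊆ Set.Icc (0:ℝ) d :=
    Set.Ioc_subset_Icc_self.trans hsub
  have hra : 0 < Real.sqrt a := Real.sqrt_pos.2 ha0
  by_cases hcase : ∃ z ∈ Set.Icc u v, |ψ' z| ≤ Real.sqrt a / 2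
  · -- small derivative everywhere
    obtain ⟨z₀, hz₀, hz₀'⟩ := hcase
    have hbound : ∀ z ∈ Set.Ioc u v, (if |ψ z| < a then |ψ' z| else 0) ≤ Real.sqrt a := by
      intro z hz
      have hz' : z ∈ Set.Icc u v := Set.Ioc_subset_Icc_self hz
      have hmvt : ‖ψ' z - ψ' z₀‖ ≤ c₁ * ‖z - z₀‖ := by
        apply Convex.norm_image_sub_le_of_norm_hasDerivWithin_le
          (f := ψ') (f' := ψ'') (s := Set.Icc (0:ℝ) d) hψ''
          (fun x hx => (hψ''lt x hx).le) (convex_Icc 0 d) (hsub hz₀) (hsub hz')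
      have hdist : ‖z - z₀‖ ≤ v - u := by
        rw [Real.norm_eq_abs, abs_sub_le_iff]
        constructor <;> [linarith [hz'.1, hz'.2, hz₀.1, hz₀.2];
          linarith [hz'.1, hz'.2, hz₀.1, hz₀.2]]
      have h1 : |ψ' z| ≤ Real.sqrt a := by
        have : c₁ * ‖z - z₀‖ ≤ c₁ * (Real.sqrt a / (2 * c₁)) := by
          apply mul_le_mul_of_nonneg_left (hdist.trans hlen) hc₁.le
        have h2 : c₁ * (Real.sqrt a / (2 * c₁)) = Real.sqrt a / 2 := by
          field_simp
        have h3 : |ψ' z - ψ' z₀| ≤ Real.sqrt a / 2 := by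
          rw [Real.norm_eq_abs] at hmvt
          calc |ψ' z - ψ' z₀| ≤ c₁ * ‖z - z₀‖ := hmvt
            _ ≤ Real.sqrt a / 2 := by rw [← h2]; exact this
        calc |ψ' z| ≤ |ψ' z - ψ' z₀| + |ψ' z₀| := by
              have := abs_add_le (ψ' z - ψ' z₀) (ψ' z₀); simpa using this
          _ ≤ Real.sqrt a / 2 + Real.sqrt a / 2 := add_le_add h3 hz₀'
          _ = Real.sqrt a := by ring
      split
      · exact h1
      · exact hra.le
    have hInt' : IntegrableOn (fun z => if |ψ z| < a then |ψ' z| else 0) (Set.Ioc u v) :=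
      hInt.mono_set hsub'
    calc (∫ z in Set.Ioc u v, (if |ψ z| < a then |ψ' z| else 0))
        ≤ ∫ _ in Set.Ioc u v, Real.sqrt a :=
          setIntegral_mono_on hInt' (integrableOn_const (by
            rw [Real.volume_Ioc]; exact ENNReal.ofReal_ne_top)) measurableSet_Ioc hbound
      _ = Real.sqrt a * (v - u) := by
          rw [setIntegral_const, Measure.real, Real.volume_Ioc, smul_eq_mul,
            ENNReal.toReal_ofReal (by linarith)]; ring
      _ ≤ Real.sqrt a * (v - u) + 2 * a := by linarith
  · -- large derivative: injective, change of variables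
    push_neg at hcase
    have hcontψ' : ContinuousOn ψ' (Set.Icc u v) := fun x hx =>
      ((hψ'' x (hsub hx)).differentiableWithinAt.continuousWithinAt).mono hsub
    have hcontψ : ContinuousOn ψ (Set.Icc u v) :=
      fun x hx => ((hψ' x (hsub hx)).differentiableWithinAt.continuousWithinAt).mono hsub
    -- ψ' has no zero on Icc u v
    have hne : ∀ z ∈ Set.Icc u v, ψ' z ≠ 0 := by
      intro z hz h0
      have := hcase z hz
      rw [h0, abs_zero] at this; linarith
    -- constant sign
    have hderivAt : ∀ x ∈ interior (Set.Icc u v), HasDerivWithinAt ψ (ψ' x)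
        (interior (Set.Icc u v)) x := by
      intro x hx
      rw [interior_Icc] at hx
      exact (hψ' x (hsub (Set.Ioo_subset_Icc_self hx))).mono
        (by rw [interior_Icc]; exact (Set.Ioo_subset_Icc_self).trans hsub)
    have hinj : Set.InjOn ψ (Set.Icc u v) := by
      rcases le_or_gt (ψ' u) 0 with hsgn | hsgn
      · -- negative everywhere
        have hneg : ∀ x ∈ Set.Icc u v, ψ' x < 0 := by
          intro x hx
          rcases lt_or_ge (ψ' x) 0 with h | h
          · exact h
          · exfalso
            have hxu : u ≤ x := hx.1
            have h0mem : (0:ℝ) ∈ Set.Icc (ψ' u) (ψ' x) := ⟨hsgn, h⟩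
            have := intermediate_value_Icc hxu (hcontψ'.mono (Set.Icc_subset_Icc_right hx.2)) h0mem
            obtain ⟨w, hw, hw0⟩ := this
            exact hne w (Set.Icc_subset_Icc_right hx.2 hw) hw0
        exact (strictAntiOn_of_hasDerivWithinAt_neg (convex_Icc u v) hcontψ hderivAt
          (fun x hx => hneg x (by rw [interior_Icc] at hx; exact Set.Ioo_subset_Icc_self hx))).injOn
      · have hpos : ∀ x ∈ Set.Icc u v, 0 < ψ' x := by
          intro x hx
          rcases lt_or_ge 0 (ψ' x) with h | h
          · exact h
          · exfalso
            have hxu : u ≤ x := hx.1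
            have h0mem : (0:ℝ) ∈ Set.Icc (ψ' x) (ψ' u) := ⟨h, hsgn.le⟩
            have := intermediate_value_Icc' hxu (hcontψ'.mono (Set.Icc_subset_Icc_right hx.2)) h0mem
            obtain ⟨w, hw, hw0⟩ := this
            exact hne w (Set.Icc_subset_Icc_right hx.2 hw) hw0
        exact (strictMonoOn_of_hasDerivWithinAt_pos (convex_Icc u v) hcontψ hderivAt
          (fun x hx => hpos x (by rw [interior_Icc] at hx; exact Set.Ioo_subset_Icc_self hx))).injOn
    -- change of variables
    have hkey := integral_image_eq_integral_abs_deriv_smul (s := Set.Ioc u v) (f := ψ) (f' := ψ')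
      measurableSet_Ioc
      (fun x hx => (hψ' x (hsub (Set.Ioc_subset_Icc_self hx))).mono
        (Set.Ioc_subset_Icc_self.trans hsub))
      (hinj.mono Set.Ioc_subset_Icc_self)
      ((Set.Ioo (-a) a).indicator (1 : ℝ → ℝ))
    have heq : (∫ z in Set.Ioc u v, (if |ψ z| < a then |ψ' z| else 0))
        = ∫ x in Set.Ioc u v, |ψ' x| • (Set.Ioo (-a) a).indicator (1 : ℝ → ℝ) (ψ x) := by
      apply setIntegral_congr_fun measurableSet_Ioc
      intro x _
      by_cases h : |ψ x| < a
      · have hmem : ψ x ∈ Set.Ioo (-a) a := by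
          rw [Set.mem_Ioo]; exact ⟨(abs_lt.1 h).1, (abs_lt.1 h).2⟩
        simp only [h, if_true, Set.indicator_of_mem hmem, Pi.one_apply, smul_eq_mul, mul_one]
      · have hmem : ψ x ∉ Set.Ioo (-a) a := fun hmem => h (abs_lt.2 ⟨hmem.1, hmem.2⟩)
        simp only [h, if_false, Set.indicator_of_notMem hmem, smul_eq_mul, mul_zero]
    rw [heq, ← hkey]
    -- bound the integral over the image
    have : (∫ x in ψ '' (Set.Ioc u v), (Set.Ioo (-a) a).indicator (1 : ℝ → ℝ) x)
        = ((volume.restrict (ψ '' (Set.Ioc u v))) (Set.Ioo (-a) a)).toReal := by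
      rw [integral_indicator_one measurableSet_Ioo]; rfl
    rw [this]
    have hle : (volume.restrict (ψ '' (Set.Ioc u v))) (Set.Ioo (-a) a) ≤ volume (Set.Ioo (-a) a) := by
      rw [Measure.restrict_apply measurableSet_Ioo]
      exact measure_mono Set.inter_subset_left
    have hvol : volume (Set.Ioo (-a) a) = ENNReal.ofReal (2 * a) := by
      rw [Real.volume_Ioo]; ring_nf
    calc ((volume.restrict (ψ '' (Set.Ioc u v))) (Set.Ioo (-a) a)).toReal
        ≤ (volume (Set.Ioo (-a) a)).toReal := by
          apply ENNReal.toReal_mono _ hle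
          rw [hvol]; exact ENNReal.ofReal_ne_top
      _ = 2 * a := by rw [hvol, ENNReal.toReal_ofReal (by linarith)]
      _ ≤ Real.sqrt a * (v - u) + 2 * a := by nlinarith [mul_nonneg hra.le (sub_nonneg.2 huv)]

/-- Lemma 2.1, first estimate (explicit constant): for `ψ : [0,d] → ℝ` twice differentiable
with `|ψ| < 1` and `|ψ''| < c₁`, and any `0 < a ≤ 1`,
`∫₀^d |ψ'| · 𝟙{|ψ| < a} dz < (d(1 + 4c₁) + 2) √a`. -/
theorem stmt_2 (d c₁ : ℝ) (hd : 0 < d) (hc₁ : 0 < c₁)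
    (ψ ψ' ψ'' : ℝ → ℝ)
    (hψ' : ∀ z ∈ Set.Icc (0 : ℝ) d, HasDerivWithinAt ψ (ψ' z) (Set.Icc 0 d) z)
    (hψ'' : ∀ z ∈ Set.Icc (0 : ℝ) d, HasDerivWithinAt ψ' (ψ'' z) (Set.Icc 0 d) z)
    (hψlt : ∀ z ∈ Set.Icc (0 : ℝ) d, |ψ z| < 1)
    (hψ''lt : ∀ z ∈ Set.Icc (0 : ℝ) d, |ψ'' z| < c₁)
    (a : ℝ) (ha0 : 0 < a) (ha1 : a ≤ 1) :
    (∫ z in Set.Icc (0 : ℝ) d, (if |ψ z| < a then |ψ' z| else 0)) <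
      (d * (1 + 4 * c₁) + 2) * Real.sqrt a := by
  set r := Real.sqrt a with hr
  have hra : 0 < r := Real.sqrt_pos.2 ha0
  have har : a ≤ r := by
    nlinarith [Real.sq_sqrt ha0.le, Real.sqrt_le_sqrt ha1, Real.sqrt_one]
  set F : ℝ → ℝ := fun z => if |ψ z| < a then |ψ' z| else 0 with hF
  -- integrability
  have hcontψ : ContinuousOn ψ (Set.Icc (0:ℝ) d) :=
    fun x hx => (hψ' x hx).differentiableWithinAt.continuousWithinAt
  have hcontψ' : ContinuousOn ψ' (Set.Icc (0:ℝ) d) :=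
    fun x hx => (hψ'' x hx).differentiableWithinAt.continuousWithinAt
  have hmeasIcc : MeasurableSet (Set.Icc (0:ℝ) d) := measurableSet_Icc
  have hFmeas : AEStronglyMeasurable F (volume.restrict (Set.Icc (0:ℝ) d)) := by
    have h1 : AEMeasurable ψ (volume.restrict (Set.Icc (0:ℝ) d)) :=
      hcontψ.aemeasurable hmeasIcc
    have h2 : AEMeasurable ψ' (volume.restrict (Set.Icc (0:ℝ) d)) :=
      hcontψ'.aemeasurable hmeasIcc
    have h3 : AEMeasurable (fun z => (ψ z, ψ' z)) (volume.restrict (Set.Icc (0:ℝ) d)) :=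
      h1.prodMk h2
    have h4 : Measurable (fun p : ℝ × ℝ => if |p.1| < a then |p.2| else 0) := by
      apply Measurable.ite _ measurable_snd.abs measurable_const
      exact measurableSet_lt measurable_fst.abs measurable_const
    exact (h4.comp_aemeasurable h3).aestronglyMeasurable
  have hInt : IntegrableOn F (Set.Icc (0:ℝ) d) := by
    apply Integrable.mono' (g := fun z => |ψ' z|)
      (hcontψ'.abs.integrableOn_Icc) hFmeas
    filter_upwards with z
    rw [Real.norm_eq_abs]
    by_cases h : |ψ z| < a
    · simp [hF, h, abs_abs]
    · simp [hF, h, abs_nonneg]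
  -- partition
  set n : ℕ := ⌈2 * d * c₁ / r⌉₊ with hn
  have hxpos : 0 < 2 * d * c₁ / r := by positivity
  have hn1 : 1 ≤ n := Nat.one_le_ceil_iff.2 hxpos
  have hnpos : (0:ℝ) < n := by exact_mod_cast hn1
  have hnge : 2 * d * c₁ / r ≤ (n:ℝ) := Nat.le_ceil _
  have hnlt : (n:ℝ) < 2 * d * c₁ / r + 1 := Nat.ceil_lt_add_one hxpos.le
  have hnne : (n:ℝ) ≠ 0 := hnpos.ne'
  set L : ℝ := d / n with hL
  have hLpos : 0 < L := div_pos hd hnpos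
  have hLle : L ≤ r / (2 * c₁) := by
    rw [hL, div_le_div_iff₀ hnpos (by positivity)]
    calc d * (2 * c₁) = (2 * d * c₁ / r) * r := by field_simp
      _ ≤ (n:ℝ) * r := by nlinarith
      _ = r * n := by ring
  have hpt : ∀ k : ℕ, k ≤ n → 0 ≤ (k:ℝ) * L ∧ (k:ℝ) * L ≤ d := by
    intro k hk
    constructor
    · positivity
    · calc (k:ℝ) * L ≤ (n:ℝ) * L := by
            apply mul_le_mul_of_nonneg_right _ hLpos.le
            exact_mod_cast hk
        _ = d := by rw [hL]; field_simp
  -- interval integrability on each piece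
  have hII : ∀ k < n, IntervalIntegrable F volume ((k:ℝ) * L) ((k+1:ℕ) * L) := by
    intro k hk
    have h1 := hpt k hk.le
    have h2 := hpt (k+1) hk
    rw [intervalIntegrable_iff_integrableOn_Ioc_of_le
      (mul_le_mul_of_nonneg_right (by exact_mod_cast Nat.le_succ k) hLpos.le)]
    apply hInt.mono_set
    exact Set.Ioc_subset_Icc_self.trans (Set.Icc_subset_Icc h1.1 h2.2)
  have hsum := intervalIntegral.sum_integral_adjacent_intervals (a := fun k => (k:ℝ) * L)
    (f := F) (μ := volume) hII
  have han : ((n:ℕ):ℝ) * L = d := by rw [hL]; field_simp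
  have hsum' : (∑ k ∈ Finset.range n, ∫ z in ((k:ℝ) * L)..((k+1:ℕ) * L), F z)
      = ∫ z in (0:ℝ)..d, F z := by
    simp only [Nat.cast_zero, zero_mul, han] at hsum
    convert hsum using 2
  have hIcc_eq : (∫ z in Set.Icc (0:ℝ) d, F z) = ∫ z in (0:ℝ)..d, F z := by
    rw [intervalIntegral.integral_of_le hd.le, integral_Icc_eq_integral_Ioc]
  rw [hIcc_eq, ← hsum']
  -- bound each term
  have hterm : ∀ k ∈ Finset.range n, (∫ z in ((k:ℝ) * L)..((k+1:ℕ) * L), F z) ≤ r * L + 2 * a := by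
    intro k hk
    have hk' := Finset.mem_range.1 hk
    have h1 := hpt k hk'.le
    have h2 := hpt (k+1) hk'
    push_cast at h2
    have hle : (k:ℝ) * L ≤ ((k:ℝ)+1) * L := by nlinarith
    rw [intervalIntegral.integral_of_le (by push_cast; exact hle)]
    have := key_interval d c₁ a hd hc₁ ha0 ψ ψ' ψ'' hψ' hψ'' hψ''lt hInt ((k:ℝ) * L) (((k:ℝ)+1) * L) h1.1 hle h2.2 (by
      have : ((k:ℝ)+1) * L - (k:ℝ) * L = L := by ring
      rw [this]; exact hLle)
    have heqv : ((k:ℝ)+1) * L - (k:ℝ) * L = L := by ring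
    rw [heqv] at this
    calc (∫ z in Set.Ioc ((k:ℝ)*L) ((k+1:ℕ)*L), F z)
        = ∫ z in Set.Ioc ((k:ℝ)*L) (((k:ℝ)+1)*L), F z := by push_cast; ring_nf
      _ ≤ r * L + 2 * a := this
  calc (∑ k ∈ Finset.range n, ∫ z in ((k:ℝ) * L)..((k+1:ℕ) * L), F z)
      ≤ ∑ k ∈ Finset.range n, (r * L + 2 * a) := Finset.sum_le_sum hterm
    _ = n * (r * L) + 2 * a * n := by
        rw [Finset.sum_const, Finset.card_range]; push_cast; ring
    _ = r * d + 2 * a * n := by rw [hL]; field_simp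
    _ < r * d + 2 * a * (2 * d * c₁ / r + 1) := by nlinarith
    _ = r * d + 4 * d * c₁ * (a / r) + 2 * a := by field_simp; ring
    _ ≤ r * d + 4 * d * c₁ * r + 2 * r := by
        have haor : a / r ≤ r := by
          rw [div_le_iff₀ hra]
          nlinarith [Real.sq_sqrt ha0.le]
        have := mul_le_mul_of_nonneg_left haor (by positivity : (0:ℝ) ≤ 4 * d * c₁)
        nlinarith
    _ = (d * (1 + 4 * c₁) + 2) * r := by ring
end

section
/- Let d > 0, c₁ > 0, and let f : (0,1] → ℝ be a continuous, strictly decreasing, positive function such that ξ ↦ f(ξ)·√ξ is bounded on (0,1] and the integral ∫₀¹ f(ξ)/√ξ dξ converges. Then there exists a constant c₃ > 0, depending only on c₁, d and f, such that for every a with 0 < a < 1 and every twice differentiable ψ : [0,d] → ℝ with |ψ(z)| < 1 and |ψ''(z)| < c₁ for all z ∈ [0,d], one has ∫₀^d |ψ'(z)| · 𝟙{|ψ(z)| ≥ a} · f(|ψ(z)|) dz < c₃. -/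
open MeasureTheory Set



private lemma aux_abs_le {s : ℝ} (t : ℝ) (hs : 0 < s) : |t| ≤ s + t^2 / s := by
  have key : |t| * s ≤ s * s + t^2 := by nlinarith [sq_abs t, sq_nonneg (s - |t|)]
  have h2 : s + t^2/s = (s*s + t^2)/s := by field_simp
  rw [h2, le_div_iff₀ hs]
  exact key

noncomputable def gg (δ u : ℝ) : ℝ :=
  max 0 (min 1 (min (2/δ * (|u| - δ/2)) (1/δ * (3*δ - |u|))))

lemma gg_cont (δ : ℝ) : Continuous (gg δ) := by
  unfold gg; fun_prop

lemma gg_nonneg (δ u : ℝ) : 0 ≤ gg δ u := le_max_left _ _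

lemma gg_le_one (δ u : ℝ) : gg δ u ≤ 1 :=
  max_le zero_le_one (min_le_left _ _)

lemma gg_eq_one {δ u : ℝ} (hδ : 0 < δ) (h1 : δ ≤ |u|) (h2 : |u| ≤ 2*δ) : gg δ u = 1 := by
  unfold gg
  have e1 : (1:ℝ) ≤ 2/δ * (|u| - δ/2) := by
    rw [div_mul_eq_mul_div, le_div_iff₀ hδ]
    nlinarith
  have e2 : (1:ℝ) ≤ 1/δ * (3*δ - |u|) := by
    rw [div_mul_eq_mul_div, le_div_iff₀ hδ]
    nlinarith
  rw [min_eq_left (le_min e1 e2), max_eq_right zero_le_one]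

lemma gg_eq_zero_of_le {δ u : ℝ} (hδ : 0 < δ) (h : |u| ≤ δ/2) : gg δ u = 0 := by
  unfold gg
  have e1 : 2/δ * (|u| - δ/2) ≤ 0 := by
    apply mul_nonpos_of_nonneg_of_nonpos
    · positivity
    · linarith
  exact max_eq_left (le_trans (le_trans (min_le_right _ _) (min_le_left _ _)) e1)

lemma gg_eq_zero_of_ge {δ u : ℝ} (hδ : 0 < δ) (h : 3*δ ≤ |u|) : gg δ u = 0 := by
  unfold gg
  have e1 : 1/δ * (3*δ - |u|) ≤ 0 := by
    apply mul_nonpos_of_nonneg_of_nonpos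
    · positivity
    · linarith
  exact max_eq_left (le_trans (le_trans (min_le_right _ _) (min_le_right _ _)) e1)

noncomputable def HH (δ u : ℝ) : ℝ := ∫ t in (0:ℝ)..u, gg δ t

lemma HH_hasDerivAt (δ u : ℝ) : HasDerivAt (HH δ) (gg δ u) u := by
  apply intervalIntegral.integral_hasDerivAt_right
  · exact (gg_cont δ).intervalIntegrable _ _
  · exact (gg_cont δ).stronglyMeasurable.stronglyMeasurableAtFilter
  · exact (gg_cont δ).continuousAt


lemma HH_abs_bound {δ : ℝ} (hδ : 0 < δ) (u : ℝ) : |HH δ u| ≤ 3*δ := by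
  rcases le_or_gt 0 u with h | h
  · have e : HH δ u = ∫ t in Ioc 0 u, gg δ t := intervalIntegral.integral_of_le h
    have hnn : 0 ≤ ∫ t in Ioc 0 u, gg δ t :=
      setIntegral_nonneg measurableSet_Ioc fun t _ => gg_nonneg δ t
    rw [e, abs_of_nonneg hnn]
    have hmono : ∫ t in Ioc 0 u, gg δ t ≤
        ∫ t in Ioc 0 u, (Icc (δ/2) (3*δ)).indicator (fun _ => (1:ℝ)) t := by
      apply setIntegral_mono_on
      · exact ((gg_cont δ).intervalIntegrable 0 u).1
      · exact (integrable_indicator_iff measurableSet_Icc).2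
          (integrableOn_const measure_Icc_lt_top.ne) |>.integrableOn
      · exact measurableSet_Ioc
      · intro t ht
        by_cases hmem : t ∈ Icc (δ/2) (3*δ)
        · rw [indicator_of_mem hmem]; exact gg_le_one δ t
        · rw [indicator_of_notMem hmem]
          rw [mem_Icc, not_and_or, not_le, not_le] at hmem
          have habs : |t| = t := abs_of_pos ht.1
          rcases hmem with h1 | h1
          · exact le_of_eq (gg_eq_zero_of_le hδ (by rw [habs]; linarith))
          · exact le_of_eq (gg_eq_zero_of_ge hδ (by rw [habs]; linarith))
    refine hmono.trans ?_
    rw [setIntegral_indicator measurableSet_Icc, setIntegral_const, smul_eq_mul, mul_one]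
    have : volume (Ioc 0 u ∩ Icc (δ/2) (3*δ)) ≤ volume (Icc (δ/2) (3*δ)) :=
      measure_mono inter_subset_right
    have h5 : (volume (Icc (δ/2) (3*δ))).toReal = 3*δ - δ/2 := by
      rw [Real.volume_Icc, ENNReal.toReal_ofReal (by linarith)]
    calc (volume (Ioc 0 u ∩ Icc (δ/2) (3*δ))).toReal
        ≤ (volume (Icc (δ/2) (3*δ))).toReal :=
          ENNReal.toReal_mono measure_Icc_lt_top.ne this
      _ ≤ 3*δ := by rw [h5]; linarith
  · have e : HH δ u = -∫ t in Ioc u 0, gg δ t := by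
      rw [HH, intervalIntegral.integral_symm, intervalIntegral.integral_of_le h.le]
    have hnn : 0 ≤ ∫ t in Ioc u 0, gg δ t :=
      setIntegral_nonneg measurableSet_Ioc fun t _ => gg_nonneg δ t
    rw [e, abs_neg, abs_of_nonneg hnn]
    have hmono : ∫ t in Ioc u 0, gg δ t ≤
        ∫ t in Ioc u 0, (Icc (-(3*δ)) (-(δ/2))).indicator (fun _ => (1:ℝ)) t := by
      apply setIntegral_mono_on
      · exact ((gg_cont δ).intervalIntegrable u 0).1
      · exact (integrable_indicator_iff measurableSet_Icc).2
          (integrableOn_const measure_Icc_lt_top.ne) |>.integrableOn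
      · exact measurableSet_Ioc
      · intro t ht
        by_cases hmem : t ∈ Icc (-(3*δ)) (-(δ/2))
        · rw [indicator_of_mem hmem]; exact gg_le_one δ t
        · rw [indicator_of_notMem hmem]
          rw [mem_Icc, not_and_or, not_le, not_le] at hmem
          have habs : |t| = -t := abs_of_nonpos ht.2
          rcases hmem with h1 | h1
          · exact le_of_eq (gg_eq_zero_of_ge hδ (by rw [habs]; linarith))
          · exact le_of_eq (gg_eq_zero_of_le hδ (by rw [habs]; linarith))
    refine hmono.trans ?_
    rw [setIntegral_indicator measurableSet_Icc, setIntegral_const, smul_eq_mul, mul_one]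
    have : volume (Ioc u 0 ∩ Icc (-(3*δ)) (-(δ/2))) ≤ volume (Icc (-(3*δ)) (-(δ/2))) :=
      measure_mono inter_subset_right
    have h5 : (volume (Icc (-(3*δ)) (-(δ/2)))).toReal = -(δ/2) - -(3*δ) := by
      rw [Real.volume_Icc, ENNReal.toReal_ofReal (by linarith)]
    calc (volume (Ioc u 0 ∩ Icc (-(3*δ)) (-(δ/2)))).toReal
        ≤ (volume (Icc (-(3*δ)) (-(δ/2)))).toReal :=
          ENNReal.toReal_mono measure_Icc_lt_top.ne this
      _ ≤ 3*δ := by rw [h5]; linarith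


lemma landau {d c₁ : ℝ} (hd : 0 < d) (hc₁ : 0 < c₁) {ψ ψ' ψ'' : ℝ → ℝ}
    (hψ : ∀ z ∈ Icc (0:ℝ) d, HasDerivWithinAt ψ (ψ' z) (Icc 0 d) z)
    (hψ' : ∀ z ∈ Icc (0:ℝ) d, HasDerivWithinAt ψ' (ψ'' z) (Icc 0 d) z)
    (hψb : ∀ z ∈ Icc (0:ℝ) d, |ψ z| < 1)
    (hψ''b : ∀ z ∈ Icc (0:ℝ) d, |ψ'' z| < c₁) :
    ∀ z ∈ Icc (0:ℝ) d, |ψ' z| ≤ 2/d + c₁*d := by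
  have hcont : ContinuousOn ψ (Icc 0 d) := fun z hz => (hψ z hz).continuousWithinAt
  have hderiv : ∀ x ∈ Ioo (0:ℝ) d, HasDerivAt ψ (ψ' x) x := fun x hx =>
    (hψ x (Ioo_subset_Icc_self hx)).hasDerivAt (Icc_mem_nhds hx.1 hx.2)
  obtain ⟨ξ, hξ, hslope⟩ := exists_hasDerivAt_eq_slope ψ ψ' hd hcont hderiv
  have hξI : ξ ∈ Icc (0:ℝ) d := Ioo_subset_Icc_self hξ
  have h1 : |ψ' ξ| ≤ 2/d := by
    rw [hslope, sub_zero, abs_div, abs_of_pos hd]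
    have ha := (hψb d (by constructor <;> linarith)).le
    have hb := (hψb 0 (by constructor <;> linarith)).le
    have habs : |ψ d - ψ 0| ≤ 2 := by
      calc |ψ d - ψ 0| ≤ |ψ d| + |ψ 0| := abs_sub _ _
        _ ≤ 2 := by linarith
    gcongr
  intro z hz
  have hlip : ‖ψ' z - ψ' ξ‖ ≤ c₁ * ‖z - ξ‖ :=
    (convex_Icc 0 d).norm_image_sub_le_of_norm_hasDerivWithin_le hψ'
      (fun x hx => (hψ''b x hx).le) hξI hz
  have hzd : |z - ξ| ≤ d := by
    rw [abs_le]; constructor <;> [linarith [hz.1, hξI.2]; linarith [hz.2, hξI.1]]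
  calc |ψ' z| = |ψ' ξ + (ψ' z - ψ' ξ)| := by ring_nf
    _ ≤ |ψ' ξ| + |ψ' z - ψ' ξ| := abs_add_le _ _
    _ ≤ 2/d + c₁ * d := by
        have : c₁ * |z - ξ| ≤ c₁ * d := by nlinarith
        simp only [Real.norm_eq_abs] at hlip; linarith

lemma ibp {d c₁ δ M : ℝ} (hd : 0 < d) (hc₁ : 0 < c₁) (hδ : 0 < δ) (hM : 0 ≤ M)
    {ψ ψ' ψ'' : ℝ → ℝ}
    (hψ : ∀ z ∈ Icc (0:ℝ) d, HasDerivWithinAt ψ (ψ' z) (Icc 0 d) z)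
    (hψ' : ∀ z ∈ Icc (0:ℝ) d, HasDerivWithinAt ψ' (ψ'' z) (Icc 0 d) z)
    (hψ'M : ∀ z ∈ Icc (0:ℝ) d, |ψ' z| ≤ M)
    (hψ''b : ∀ z ∈ Icc (0:ℝ) d, |ψ'' z| < c₁) :
    ∫ z in Icc (0:ℝ) d, gg δ (ψ z) * (ψ' z)^2 ≤ (2*M + c₁*d) * (3*δ) := by
  have hψcont : ContinuousOn ψ (Icc 0 d) := fun z hz => (hψ z hz).continuousWithinAt
  have hψ'cont : ContinuousOn ψ' (Icc 0 d) := fun z hz => (hψ' z hz).continuousWithinAt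
  have hHHcont : Continuous (HH δ) :=
    continuous_iff_continuousAt.2 fun u => (HH_hasDerivAt δ u).continuousAt
  set P : ℝ → ℝ := fun z => ψ' z * HH δ (ψ z) with hP
  set Q1 : ℝ → ℝ := fun z => ψ'' z * HH δ (ψ z) with hQ1
  set Q2 : ℝ → ℝ := fun z => gg δ (ψ z) * (ψ' z)^2 with hQ2
  have hPcont : ContinuousOn P (Icc 0 d) :=
    hψ'cont.mul (hHHcont.comp_continuousOn hψcont)
  have hPderiv : ∀ x ∈ Ioo (0:ℝ) d, HasDerivAt P (Q1 x + Q2 x) x := by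
    intro x hx
    have hmem : Icc (0:ℝ) d ∈ nhds x := Icc_mem_nhds hx.1 hx.2
    have hψx : HasDerivAt ψ (ψ' x) x := (hψ x (Ioo_subset_Icc_self hx)).hasDerivAt hmem
    have hψ'x : HasDerivAt ψ' (ψ'' x) x := (hψ' x (Ioo_subset_Icc_self hx)).hasDerivAt hmem
    have hHψ : HasDerivAt (fun z => HH δ (ψ z)) (gg δ (ψ x) * ψ' x) x :=
      (HH_hasDerivAt δ (ψ x)).comp x hψx
    have := hψ'x.mul hHψ
    refine HasDerivAt.congr_deriv this ?_
    simp only [hQ1, hQ2]; ring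
  -- integrability of Q1 on [0, d]
  have hQ2cont : ContinuousOn Q2 (Icc 0 d) :=
    ((gg_cont δ).comp_continuousOn hψcont).mul (hψ'cont.pow 2)
  have hQ2int : IntervalIntegrable Q2 volume 0 d := by
    rw [intervalIntegrable_iff_integrableOn_Icc_of_le hd.le]
    exact hQ2cont.integrableOn_compact isCompact_Icc
  have hQ1meas : AEStronglyMeasurable Q1 (volume.restrict (Ioc 0 d)) := by
    have hres : volume.restrict (Ioc (0:ℝ) d) = volume.restrict (Ioo 0 d) :=
      (Measure.restrict_congr_set Ioo_ae_eq_Ioc).symm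
    rw [hres]
    have hF : AEStronglyMeasurable (fun z => deriv ψ' z * HH δ (ψ z))
        (volume.restrict (Ioo 0 d)) := by
      apply AEStronglyMeasurable.mul
      · exact (measurable_deriv ψ').aestronglyMeasurable
      · exact ((hHHcont.comp_continuousOn hψcont).mono Ioo_subset_Icc_self).aestronglyMeasurable
          measurableSet_Ioo
    apply hF.congr
    filter_upwards [ae_restrict_mem measurableSet_Ioo] with x hx
    have hmem : Icc (0:ℝ) d ∈ nhds x := Icc_mem_nhds hx.1 hx.2
    have : HasDerivAt ψ' (ψ'' x) x := (hψ' x (Ioo_subset_Icc_self hx)).hasDerivAt hmem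
    rw [this.deriv]
  have hQ1bd : ∀ x ∈ Icc (0:ℝ) d, ‖Q1 x‖ ≤ c₁ * (3*δ) := by
    intro x hx
    have h1 : |ψ'' x| ≤ c₁ := (hψ''b x hx).le
    have h2 : |HH δ (ψ x)| ≤ 3*δ := HH_abs_bound hδ _
    calc ‖Q1 x‖ = |ψ'' x| * |HH δ (ψ x)| := abs_mul _ _
      _ ≤ c₁ * (3*δ) := by
          apply mul_le_mul h1 h2 (abs_nonneg _) hc₁.le
  have hQ1int : IntervalIntegrable Q1 volume 0 d := by
    rw [intervalIntegrable_iff_integrableOn_Ioc_of_le hd.le]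
    apply Integrable.mono' (g := fun _ => c₁ * (3*δ))
    · exact integrableOn_const measure_Ioc_lt_top.ne
    · exact hQ1meas
    · filter_upwards [ae_restrict_mem measurableSet_Ioc] with x hx
      exact hQ1bd x (Ioc_subset_Icc_self hx)
  -- FTC
  have hFTC : ∫ z in (0:ℝ)..d, (Q1 z + Q2 z) = P d - P 0 := by
    apply intervalIntegral.integral_eq_sub_of_hasDeriv_right_of_le hd.le hPcont
    · intro x hx; exact (hPderiv x hx).hasDerivWithinAt
    · exact hQ1int.add hQ2int
  rw [intervalIntegral.integral_add hQ1int hQ2int] at hFTC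
  have hQ2eq : ∫ z in Icc (0:ℝ) d, Q2 z = ∫ z in (0:ℝ)..d, Q2 z := by
    rw [intervalIntegral.integral_of_le hd.le, integral_Icc_eq_integral_Ioc]
  have hQ1abs : ‖∫ z in (0:ℝ)..d, Q1 z‖ ≤ c₁ * (3*δ) * |d - 0| := by
    apply intervalIntegral.norm_integral_le_of_norm_le_const
    intro x hx
    rw [uIoc_of_le hd.le] at hx
    exact hQ1bd x (Ioc_subset_Icc_self hx)
  have hPd : |P d| ≤ M * (3*δ) := by
    have h1 := hψ'M d ⟨hd.le, le_refl d⟩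
    have h2 := HH_abs_bound hδ (ψ d)
    calc |P d| = |ψ' d| * |HH δ (ψ d)| := abs_mul _ _
      _ ≤ M * (3*δ) := mul_le_mul h1 h2 (abs_nonneg _) hM
  have hP0 : |P 0| ≤ M * (3*δ) := by
    have h1 := hψ'M 0 ⟨le_refl (0:ℝ), hd.le⟩
    have h2 := HH_abs_bound hδ (ψ 0)
    calc |P 0| = |ψ' 0| * |HH δ (ψ 0)| := abs_mul _ _
      _ ≤ M * (3*δ) := mul_le_mul h1 h2 (abs_nonneg _) hM
  rw [hQ2eq]
  rw [Real.norm_eq_abs] at hQ1abs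
  simp only [sub_zero, abs_of_pos hd] at hQ1abs
  rw [abs_le] at hQ1abs hPd hP0
  nlinarith [hQ1abs.1, hQ1abs.2, hPd.1, hPd.2, hP0.1, hP0.2, hFTC]


lemma dyadic_sum {f : ℝ → ℝ}
    (hfanti : StrictAntiOn f (Set.Ioc 0 1))
    (hfpos : ∀ ξ ∈ Set.Ioc (0 : ℝ) 1, 0 < f ξ)
    (hfint : IntegrableOn (fun ξ => f ξ / Real.sqrt ξ) (Set.Ioc 0 1) volume)
    (m : ℕ) :
    ∑ k ∈ Finset.range m, f ((1/2:ℝ)^(k+1)) * Real.sqrt ((1/2:ℝ)^(k+1))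
      ≤ 2 * ∫ ξ in Ioc (0:ℝ) 1, f ξ / Real.sqrt ξ := by
  set S : ℕ → Set ℝ := fun k => Ioc ((1/2:ℝ)^(k+2)) ((1/2:ℝ)^(k+1)) with hS
  have hδpos : ∀ k : ℕ, (0:ℝ) < (1/2:ℝ)^(k+1) := fun k => by positivity
  have hδle1 : ∀ k : ℕ, ((1/2:ℝ))^(k+1) ≤ 1 := fun k =>
    pow_le_one₀ (by norm_num) (by norm_num)
  have hSsub : ∀ k : ℕ, S k ⊆ Ioc (0:ℝ) 1 := by
    intro k ξ hξ
    exact ⟨lt_trans (by positivity) hξ.1, le_trans hξ.2 (hδle1 k)⟩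
  -- per-interval lower bound
  have hkey : ∀ k : ℕ, f ((1/2:ℝ)^(k+1)) * Real.sqrt ((1/2:ℝ)^(k+1))
      ≤ 2 * ∫ ξ in S k, f ξ / Real.sqrt ξ := by
    intro k
    set δ := ((1/2:ℝ))^(k+1) with hδ
    have hδ0 : 0 < δ := hδpos k
    have hδmem : δ ∈ Ioc (0:ℝ) 1 := ⟨hδ0, hδle1 k⟩
    have hhalf : ((1/2:ℝ))^(k+2) = δ/2 := by rw [hδ, pow_succ]; ring
    have hptwise : ∀ ξ ∈ S k, f δ / Real.sqrt δ ≤ f ξ / Real.sqrt ξ := by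
      intro ξ hξ
      have hξmem : ξ ∈ Ioc (0:ℝ) 1 := hSsub k hξ
      have hfξ : f δ ≤ f ξ := by
        rcases eq_or_lt_of_le hξ.2 with h | h
        · rw [h]
        · exact (hfanti hξmem hδmem h).le
      have hsq : Real.sqrt ξ ≤ Real.sqrt δ := Real.sqrt_le_sqrt hξ.2
      have hsqpos : 0 < Real.sqrt ξ := Real.sqrt_pos.2 hξmem.1
      exact div_le_div₀ (hfpos ξ hξmem).le hfξ hsqpos hsq
    have hmono : ∫ _ξ in S k, f δ / Real.sqrt δ ≤ ∫ ξ in S k, f ξ / Real.sqrt ξ := by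
      apply setIntegral_mono_on
      · exact integrableOn_const measure_Ioc_lt_top.ne
      · exact hfint.mono_set (hSsub k)
      · exact measurableSet_Ioc
      · exact hptwise
    have hconst : ∫ _ξ in S k, f δ / Real.sqrt δ = (δ - δ/2) * (f δ / Real.sqrt δ) := by
      rw [setIntegral_const, smul_eq_mul]
      congr 1
      have hSk : S k = Ioc (δ/2) δ := by rw [← hhalf]
      rw [hSk, measureReal_def, Real.volume_Ioc, ENNReal.toReal_ofReal (by linarith)]
    have hval : (δ - δ/2) * (f δ / Real.sqrt δ) = f δ * Real.sqrt δ / 2 := by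
      calc (δ - δ/2) * (f δ / Real.sqrt δ) = f δ * (δ / Real.sqrt δ) / 2 := by ring
        _ = f δ * Real.sqrt δ / 2 := by rw [Real.div_sqrt]
    rw [hconst, hval] at hmono
    linarith
  -- sum over k
  calc ∑ k ∈ Finset.range m, f ((1/2:ℝ)^(k+1)) * Real.sqrt ((1/2:ℝ)^(k+1))
      ≤ ∑ k ∈ Finset.range m, 2 * ∫ ξ in S k, f ξ / Real.sqrt ξ :=
        Finset.sum_le_sum fun k _ => hkey k
    _ = 2 * ∑ k ∈ Finset.range m, ∫ ξ in S k, f ξ / Real.sqrt ξ := by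
        rw [Finset.mul_sum]
    _ = 2 * ∫ ξ in ⋃ k ∈ Finset.range m, S k, f ξ / Real.sqrt ξ := by
        congr 1
        rw [integral_biUnion_finset]
        · exact fun k _ => measurableSet_Ioc
        · intro j _ k _ hjk
          rcases lt_or_gt_of_ne hjk with h | h
          · apply Set.Ioc_disjoint_Ioc.2
            refine le_trans (min_le_right _ _) (le_trans ?_ (le_max_left _ _))
            exact pow_le_pow_of_le_one (by norm_num) (by norm_num) (by omega)
          · apply Set.Ioc_disjoint_Ioc.2
            refine le_trans (min_le_left _ _) (le_trans ?_ (le_max_right _ _))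
            exact pow_le_pow_of_le_one (by norm_num) (by norm_num) (by omega)
        · exact fun k _ => hfint.mono_set (hSsub k)
    _ ≤ 2 * ∫ ξ in Ioc (0:ℝ) 1, f ξ / Real.sqrt ξ := by
        have hnn : 0 ≤ᵐ[volume.restrict (Ioc (0:ℝ) 1)] fun ξ => f ξ / Real.sqrt ξ := by
          filter_upwards [ae_restrict_mem measurableSet_Ioc] with ξ hξ
          have := hfpos ξ hξ
          have := Real.sqrt_nonneg ξ
          positivity
        have hsub : (⋃ k ∈ Finset.range m, S k) ⊆ Ioc (0:ℝ) 1 := by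
          apply Set.iUnion₂_subset
          exact fun k _ => hSsub k
        have := setIntegral_mono_set hfint hnn (HasSubset.Subset.eventuallyLE hsub)
        linarith

/-- Lemma 2.1, second estimate: for `f : (0,1] → ℝ` continuous, strictly decreasing, positive,
with `f(ξ)√ξ` bounded and `∫₀¹ f(ξ)/√ξ dξ` convergent, there is `c₃ > 0` depending only on
`c₁`, `d` and `f` such that for every `0 < a < 1` and every twice differentiable
`ψ : [0,d] → ℝ` with `|ψ| < 1`, `|ψ''| < c₁`, one has
`∫₀^d |ψ'| · 𝟙{|ψ| ≥ a} · f(|ψ|) dz < c₃`. -/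
theorem stmt_3 (d c₁ : ℝ) (hd : 0 < d) (hc₁ : 0 < c₁)
    (f : ℝ → ℝ)
    (hfcont : ContinuousOn f (Set.Ioc 0 1))
    (hfanti : StrictAntiOn f (Set.Ioc 0 1))
    (hfpos : ∀ ξ ∈ Set.Ioc (0 : ℝ) 1, 0 < f ξ)
    (hfbdd : ∃ B : ℝ, ∀ ξ ∈ Set.Ioc (0 : ℝ) 1, f ξ * Real.sqrt ξ ≤ B)
    (hfint : IntegrableOn (fun ξ => f ξ / Real.sqrt ξ) (Set.Ioc 0 1) volume) :
    ∃ c₃ > 0, ∀ a : ℝ, 0 < a → a < 1 →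
      ∀ ψ ψ' ψ'' : ℝ → ℝ,
        (∀ z ∈ Set.Icc (0 : ℝ) d, HasDerivWithinAt ψ (ψ' z) (Set.Icc 0 d) z) →
        (∀ z ∈ Set.Icc (0 : ℝ) d, HasDerivWithinAt ψ' (ψ'' z) (Set.Icc 0 d) z) →
        (∀ z ∈ Set.Icc (0 : ℝ) d, |ψ z| < 1) →
        (∀ z ∈ Set.Icc (0 : ℝ) d, |ψ'' z| < c₁) →
        (∫ z in Set.Icc (0 : ℝ) d, (if a ≤ |ψ z| then |ψ' z| * f |ψ z| else 0)) < c₃ := by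
  have hsc₁ : 0 < Real.sqrt c₁ := Real.sqrt_pos.2 hc₁
  set M : ℝ := 2/d + c₁*d with hMdef
  have hM0 : 0 ≤ M := by positivity
  set C₂ : ℝ := Real.sqrt c₁ * d + (2*M + c₁*d) * 3 / Real.sqrt c₁ with hC₂def
  have hC₂0 : 0 < C₂ := by positivity
  set I : ℝ := ∫ ξ in Ioc (0:ℝ) 1, f ξ / Real.sqrt ξ with hIdef
  have hI0 : 0 ≤ I := by
    apply setIntegral_nonneg measurableSet_Ioc
    intro ξ hξ
    have := hfpos ξ hξ
    have := Real.sqrt_nonneg ξ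
    positivity
  refine ⟨2*C₂*I + 1, by positivity, ?_⟩
  intro a ha0 ha1 ψ ψ' ψ'' hψ hψ' hψb hψ''b
  have hψcont : ContinuousOn ψ (Icc 0 d) := fun z hz => (hψ z hz).continuousWithinAt
  have hψ'cont : ContinuousOn ψ' (Icc 0 d) := fun z hz => (hψ' z hz).continuousWithinAt
  have hψ'M : ∀ z ∈ Icc (0:ℝ) d, |ψ' z| ≤ M := landau hd hc₁ hψ hψ' hψb hψ''b
  obtain ⟨n, hn⟩ := exists_pow_lt_of_lt_one ha0 (by norm_num : (1/2:ℝ) < 1)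
  set m : ℕ := n + 1 with hmdef
  set δk : ℕ → ℝ := fun k => (1/2:ℝ)^(k+1) with hδkdef
  have hδ0 : ∀ k, 0 < δk k := fun k => by positivity
  have hδ1 : ∀ k, δk k ≤ 1 := fun k => pow_le_one₀ (by norm_num) (by norm_num)
  have hδmem : ∀ k, δk k ∈ Ioc (0:ℝ) 1 := fun k => ⟨hδ0 k, hδ1 k⟩
  set sk : ℕ → ℝ := fun k => Real.sqrt (c₁ * δk k) with hskdef
  have hsk0 : ∀ k, 0 < sk k := fun k => Real.sqrt_pos.2 (by positivity)
  set T : ℕ → ℝ → ℝ := fun k z =>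
    f (δk k) * sk k + (f (δk k) / sk k) * (gg (δk k) (ψ z) * (ψ' z)^2) with hTdef
  have hTnonneg : ∀ k z, 0 ≤ T k z := by
    intro k z
    have h1 := (hfpos _ (hδmem k)).le
    have h2 := (hsk0 k).le
    have h3 := gg_nonneg (δk k) (ψ z)
    have h4 := sq_nonneg (ψ' z)
    positivity
  have hTcont : ∀ k, ContinuousOn (T k) (Icc 0 d) := by
    intro k
    apply ContinuousOn.add continuousOn_const
    exact continuousOn_const.mul
      (((gg_cont (δk k)).comp_continuousOn hψcont).mul (hψ'cont.pow 2))
  have hTint : ∀ k, IntegrableOn (T k) (Icc 0 d) volume := fun k =>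
    (hTcont k).integrableOn_compact isCompact_Icc
  -- set C and functions
  set F : ℝ → ℝ := fun z => |ψ' z| * f |ψ z| with hFdef
  set C : Set ℝ := Icc 0 d ∩ {z | a ≤ |ψ z|} with hCdef
  have hCclosed : IsClosed C := by
    have : C = Icc 0 d ∩ (fun z => |ψ z|) ⁻¹' (Ici a) := rfl
    rw [this]
    exact ContinuousOn.preimage_isClosed_of_isClosed
      (continuous_abs.comp_continuousOn hψcont) isClosed_Icc isClosed_Ici
  have hCmeas : MeasurableSet C := hCclosed.measurableSet
  have hCsub : C ⊆ Icc 0 d := inter_subset_left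
  have hCcompact : IsCompact C := IsCompact.of_isClosed_subset isCompact_Icc hCclosed hCsub
  have hFcont : ContinuousOn F C := by
    apply ContinuousOn.mul
    · exact (continuous_abs.comp_continuousOn hψ'cont).mono hCsub
    · apply hfcont.comp ((continuous_abs.comp_continuousOn hψcont).mono hCsub)
      intro z hz
      exact ⟨lt_of_lt_of_le ha0 hz.2, (hψb z hz.1).le⟩
  have hFintC : IntegrableOn F C volume := hFcont.integrableOn_compact hCcompact
  have hIndInt : IntegrableOn (C.indicator F) (Icc 0 d) volume := by
    rw [IntegrableOn, integrable_indicator_iff hCmeas]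
    rw [IntegrableOn, Measure.restrict_restrict_of_subset hCsub]
    exact hFintC
  -- pointwise bound
  have hpt : ∀ z ∈ Icc (0:ℝ) d, C.indicator F z ≤ ∑ k ∈ Finset.range m, T k z := by
    intro z hz
    by_cases hmem : z ∈ C
    · rw [indicator_of_mem hmem]
      set t : ℝ := |ψ z| with htdef
      have hta : a ≤ t := hmem.2
      have ht1 : t < 1 := hψb z hz
      have ht0 : 0 < t := lt_of_lt_of_le ha0 hta
      have htmem : t ∈ Ioc (0:ℝ) 1 := ⟨ht0, ht1.le⟩
      -- find the band
      have hPn : (1/2:ℝ)^(n+1) < t := by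
        calc (1/2:ℝ)^(n+1) < (1/2:ℝ)^n := by
              apply pow_lt_pow_right_of_lt_one₀ (by norm_num) (by norm_num) (by omega)
          _ < a := hn
          _ ≤ t := hta
      have hex : ∃ k, (1/2:ℝ)^(k+1) < t := ⟨n, hPn⟩
      set k : ℕ := Nat.find hex with hkdef
      have hklt : δk k < t := Nat.find_spec hex
      have hkm : k ∈ Finset.range m := by
        have : k ≤ n := Nat.find_le hPn
        simp only [hmdef, Finset.mem_range]; omega
      have hkub : t ≤ 2 * δk k := by
        rcases Nat.eq_zero_or_pos k with hk0 | hkpos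
        · have : 2 * δk 0 = 1 := by norm_num [hδkdef]
          rw [hk0, this]; exact ht1.le
        · obtain ⟨j, hj⟩ := Nat.exists_eq_succ_of_ne_zero hkpos.ne'
          have hnotP : ¬ ((1/2:ℝ)^(j+1) < t) := Nat.find_min hex (by omega)
          push_neg at hnotP
          have : 2 * δk k = (1/2:ℝ)^(j+1) := by
            rw [hj, hδkdef]; simp only []; rw [pow_succ]; ring
          rw [this]; exact hnotP
      -- estimate
      have hgg1 : gg (δk k) (ψ z) = 1 := gg_eq_one (hδ0 k) hklt.le hkub
      have hft : f t ≤ f (δk k) := (hfanti (hδmem k) htmem hklt).le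
      have hft0 : 0 < f t := hfpos t htmem
      have habs : |ψ' z| ≤ sk k + (ψ' z)^2 / sk k := aux_abs_le (ψ' z) (hsk0 k)
      have hstep : F z ≤ T k z := by
        have hA0 : 0 ≤ sk k + (ψ' z)^2 / sk k := le_trans (abs_nonneg _) habs
        calc F z = |ψ' z| * f t := rfl
          _ ≤ (sk k + (ψ' z)^2 / sk k) * f (δk k) :=
              mul_le_mul habs hft hft0.le hA0
          _ = T k z := by
              rw [hTdef]; simp only []; rw [hgg1]
              field_simp
      exact hstep.trans (Finset.single_le_sum (fun j _ => hTnonneg j z) hkm)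
    · rw [indicator_of_notMem hmem]
      exact Finset.sum_nonneg fun j _ => hTnonneg j z
  -- per-band integral bound
  have hband : ∀ k, ∫ z in Icc (0:ℝ) d, T k z
      ≤ C₂ * (f (δk k) * Real.sqrt (δk k)) := by
    intro k
    have hX : IntegrableOn (fun z => gg (δk k) (ψ z) * (ψ' z)^2) (Icc 0 d) volume :=
      (((gg_cont (δk k)).comp_continuousOn hψcont).mul (hψ'cont.pow 2)).integrableOn_compact
        isCompact_Icc
    have hsplit : ∫ z in Icc (0:ℝ) d, T k z
        = f (δk k) * sk k * d
          + (f (δk k) / sk k) * ∫ z in Icc (0:ℝ) d, gg (δk k) (ψ z) * (ψ' z)^2 := by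
      rw [hTdef]
      rw [integral_add (by exact integrableOn_const measure_Icc_lt_top.ne) (hX.const_mul _)]
      rw [setIntegral_const, integral_const_mul, smul_eq_mul]
      congr 1
      rw [measureReal_def, Real.volume_Icc, ENNReal.toReal_ofReal (by linarith), sub_zero]
      ring
    rw [hsplit]
    have hibp := ibp hd hc₁ (hδ0 k) hM0 hψ hψ' hψ'M hψ''b (δ := δk k)
    have hf0 := (hfpos _ (hδmem k)).le
    have h2 : (f (δk k) / sk k) * ∫ z in Icc (0:ℝ) d, gg (δk k) (ψ z) * (ψ' z)^2
        ≤ (f (δk k) / sk k) * ((2*M + c₁*d) * (3 * δk k)) := by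
      apply mul_le_mul_of_nonneg_left hibp
      positivity
    have hsqδ : 0 < Real.sqrt (δk k) := Real.sqrt_pos.2 (hδ0 k)
    have hskeq : sk k = Real.sqrt c₁ * Real.sqrt (δk k) := by
      rw [hskdef]; exact Real.sqrt_mul hc₁.le _
    have halg : f (δk k) * sk k * d + (f (δk k) / sk k) * ((2*M + c₁*d) * (3 * δk k))
        = C₂ * (f (δk k) * Real.sqrt (δk k)) := by
      have hδeq : δk k = Real.sqrt (δk k) * Real.sqrt (δk k) :=
        (Real.mul_self_sqrt (hδ0 k).le).symm
      have hc₁eq : c₁ = Real.sqrt c₁ * Real.sqrt c₁ := (Real.mul_self_sqrt hc₁.le).symm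
      rw [hC₂def, hskeq]
      generalize hgen : Real.sqrt (δk k) = r at *
      generalize hgen2 : Real.sqrt c₁ = s at *
      rw [hδeq]
      have hr0 : r ≠ 0 := ne_of_gt hsqδ
      have hs0 : s ≠ 0 := ne_of_gt hsc₁
      field_simp
    linarith
  -- total
  have hsum : ∑ k ∈ Finset.range m, (C₂ * (f (δk k) * Real.sqrt (δk k))) ≤ C₂ * (2 * I) := by
    rw [← Finset.mul_sum]
    apply mul_le_mul_of_nonneg_left _ hC₂0.le
    exact dyadic_sum hfanti hfpos hfint m
  have hSint : IntegrableOn (fun z => ∑ k ∈ Finset.range m, T k z) (Icc 0 d) volume :=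
    (integrable_finset_sum _ fun k _ => hTint k)
  have hIeq : (∫ z in Icc (0:ℝ) d, (if a ≤ |ψ z| then |ψ' z| * f |ψ z| else 0))
      = ∫ z in Icc (0:ℝ) d, C.indicator F z := by
    apply setIntegral_congr_fun measurableSet_Icc
    intro z hz
    show (if a ≤ |ψ z| then |ψ' z| * f |ψ z| else 0) = C.indicator F z
    by_cases h : a ≤ |ψ z|
    · rw [if_pos h, indicator_of_mem (show z ∈ C from ⟨hz, h⟩)]
    · rw [if_neg h, indicator_of_notMem (fun hc => h hc.2)]
  calc (∫ z in Icc (0:ℝ) d, (if a ≤ |ψ z| then |ψ' z| * f |ψ z| else 0))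
      = ∫ z in Icc (0:ℝ) d, C.indicator F z := hIeq
    _ ≤ ∫ z in Icc (0:ℝ) d, ∑ k ∈ Finset.range m, T k z :=
        setIntegral_mono_on hIndInt hSint measurableSet_Icc hpt
    _ = ∑ k ∈ Finset.range m, ∫ z in Icc (0:ℝ) d, T k z :=
        integral_finset_sum _ fun k _ => hTint k
    _ ≤ ∑ k ∈ Finset.range m, C₂ * (f (δk k) * Real.sqrt (δk k)) :=
        Finset.sum_le_sum fun k _ => hband k
    _ ≤ C₂ * (2 * I) := hsum
    _ < 2*C₂*I + 1 := by linarith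
end

section
/- Let d > 0, c₁ > 0, and let ψ : [0,d] → ℝ be twice differentiable with |ψ(z)| < 1 and |ψ''(z)| < c₁ for all z ∈ [0,d]. Then for every a > 0 and every l > 0 one has ∫₀^d |ψ'(z)| · 𝟙{|ψ(z)| < a} dz ≤ d·l + 4c₁·d·a/l + 2a. -/
open MeasureTheory


noncomputable def hcut (a c t : ℝ) : ℝ := max 0 (min 1 ((c - |t|) / (c - a)))
noncomputable def Hcut (a c t : ℝ) : ℝ := ∫ s in (0:ℝ)..t, hcut a c s

lemma hcut_nonneg (a c t : ℝ) : 0 ≤ hcut a c t := le_max_left _ _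
lemma hcut_le_one (a c t : ℝ) (hac : a < c) : hcut a c t ≤ 1 := by
  unfold hcut
  rcases le_or_gt ((c - |t|) / (c - a)) 1 with h | h
  · exact max_le (by norm_num) (min_le_of_left_le le_rfl) |>.trans_eq rfl |>.trans le_rfl
  · simp [min_eq_right h.le]

lemma continuous_hcut (a c : ℝ) : Continuous (hcut a c) := by
  unfold hcut
  fun_prop

lemma hcut_eq_one (a c t : ℝ) (ha : 0 < a) (hac : a < c) (ht : |t| < a) : hcut a c t = 1 := by
  unfold hcut
  have h1 : (1:ℝ) ≤ (c - |t|) / (c - a) := by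
    rw [le_div_iff₀ (by linarith)]
    linarith
  rw [min_eq_left h1]
  simp

lemma hcut_eq_zero (a c t : ℝ) (hac : a < c) (ht : c ≤ |t|) : hcut a c t = 0 := by
  unfold hcut
  have h1 : (c - |t|) / (c - a) ≤ 0 := div_nonpos_of_nonpos_of_nonneg (by linarith) (by linarith)
  rw [max_eq_left]
  exact min_le_of_right_le h1 |>.trans le_rfl

lemma hasDerivAt_Hcut (a c t : ℝ) : HasDerivAt (Hcut a c) (hcut a c t) t :=
  ((continuous_hcut a c).integral_hasStrictDerivAt 0 t).hasDerivAt

lemma abs_Hcut_le (a c : ℝ) (ha : 0 < a) (hac : a < c) (t : ℝ) : |Hcut a c t| ≤ c := by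
  have hint : ∀ x y : ℝ, IntervalIntegrable (hcut a c) volume x y :=
    fun x y => (continuous_hcut a c).intervalIntegrable x y
  have hbase : ∀ t : ℝ, |t| ≤ c → |Hcut a c t| ≤ c := by
    intro t ht
    have := intervalIntegral.norm_integral_le_of_norm_le_const
      (C := 1) (f := hcut a c) (a := 0) (b := t) ?_
    · simpa [Hcut, Real.norm_eq_abs] using this.trans (by simpa using ht)
    · intro x hx
      rw [Real.norm_eq_abs, abs_of_nonneg (hcut_nonneg a c x)]
      exact hcut_le_one a c x hac
  rcases le_or_gt (|t|) c with ht | ht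
  · exact hbase t ht
  · rcases le_or_gt 0 t with h0 | h0
    · have hc : 0 ≤ c := by linarith [abs_nonneg t]
      have heq : Hcut a c t = Hcut a c c := by
        have : Hcut a c c + ∫ s in c..t, hcut a c s = Hcut a c t :=
          intervalIntegral.integral_add_adjacent_intervals (hint 0 c) (hint c t)
        have hz : (∫ s in c..t, hcut a c s) = 0 := by
          rw [intervalIntegral.integral_congr (g := fun _ => (0:ℝ))
            (fun s hs => ?_)]
          · simp
          · apply hcut_eq_zero a c s hac
            rw [Set.uIcc_of_le (by rw [abs_of_nonneg h0] at ht; linarith)] at hs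
            calc c ≤ s := hs.1
            _ ≤ |s| := le_abs_self s
        linarith [this]
      rw [heq]
      exact hbase c (by rw [abs_of_nonneg hc])
    · have hc : 0 ≤ c := by linarith [abs_nonneg t]
      have heq : Hcut a c t = Hcut a c (-c) := by
        have : Hcut a c (-c) + ∫ s in (-c)..t, hcut a c s = Hcut a c t :=
          intervalIntegral.integral_add_adjacent_intervals (hint 0 (-c)) (hint (-c) t)
        have hz : (∫ s in (-c)..t, hcut a c s) = 0 := by
          rw [intervalIntegral.integral_congr (g := fun _ => (0:ℝ))
            (fun s hs => ?_)]
          · simp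
          · apply hcut_eq_zero a c s hac
            rw [Set.uIcc_of_ge (by rw [abs_of_neg h0] at ht; linarith)] at hs
            have hsc : s ≤ -c := hs.2
            rw [abs_of_nonpos (by linarith)]
            linarith
        linarith [this]
      rw [heq]
      exact hbase (-c) (by rw [abs_of_nonpos (by linarith)]; ring_nf; exact le_rfl)

noncomputable def qrt (l v : ℝ) : ℝ := Real.sqrt (l^2 + v^2)
noncomputable def ucut (l v : ℝ) : ℝ := v / qrt l v

lemma qrt_sq (l v : ℝ) : (qrt l v)^2 = l^2 + v^2 :=
  Real.sq_sqrt (by positivity)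

lemma qrt_pos (l v : ℝ) (hl : 0 < l) : 0 < qrt l v :=
  Real.sqrt_pos.2 (by positivity)

lemma le_qrt (l v : ℝ) (hl : 0 < l) : l ≤ qrt l v := by
  have h := qrt_sq l v
  nlinarith [qrt_pos l v hl]

lemma qrt_le (l v : ℝ) (hl : 0 < l) : qrt l v ≤ l + |v| := by
  have h := qrt_sq l v
  nlinarith [qrt_pos l v hl, abs_nonneg v, sq_abs v]

lemma abs_ucut_le_one (l v : ℝ) (hl : 0 < l) : |ucut l v| ≤ 1 := by
  rw [ucut, abs_div, abs_of_pos (qrt_pos l v hl), div_le_one (qrt_pos l v hl)]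
  have h := qrt_sq l v
  nlinarith [qrt_pos l v hl, abs_nonneg v, sq_abs v]

lemma ucut_mul_nonneg (l v : ℝ) (hl : 0 < l) : 0 ≤ ucut l v * v := by
  rw [ucut, div_mul_eq_mul_div]
  exact div_nonneg (by nlinarith) (qrt_pos l v hl).le

lemma abs_le_add_ucut_mul (l v : ℝ) (hl : 0 < l) : |v| ≤ l + ucut l v * v := by
  have hq := qrt_pos l v hl
  have hsq := qrt_sq l v
  have hle := qrt_le l v hl
  have hge := le_qrt l v hl
  rcases le_or_gt (|v|) l with hv | hv
  · have := ucut_mul_nonneg l v hl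
    linarith
  · rw [ucut, div_mul_eq_mul_div]
    have h1 : |v| - l ≤ v * v / qrt l v := by
      rw [le_div_iff₀ hq]
      nlinarith [sq_abs v]
    linarith

lemma hasDerivAt_ucut (l v : ℝ) (hl : 0 < l) :
    HasDerivAt (ucut l) (l^2 / (qrt l v)^3) v := by
  have hne : l^2 + v^2 ≠ 0 := by positivity
  have hq := qrt_pos l v hl
  have hinner : HasDerivAt (fun w : ℝ => l^2 + w^2) (2*v) v := by
    simpa using (hasDerivAt_pow 2 v).const_add (l^2)
  have hsq := qrt_sq l v
  have hsqrt : HasDerivAt (fun w : ℝ => qrt l w) (v / qrt l v) v := by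
    have h : HasDerivAt (fun w : ℝ => qrt l w) (1 / (2 * √(l ^ 2 + v ^ 2)) * (2 * v)) v :=
      (Real.hasDerivAt_sqrt hne).comp v hinner
    convert h using 1
    show v / qrt l v = 1 / (2 * √(l ^ 2 + v ^ 2)) * (2 * v)
    rw [qrt]
    ring
  have hdiv := (hasDerivAt_id v).div hsqrt hq.ne'
  have key : (1 * qrt l v - id v * (v / qrt l v)) / qrt l v ^ 2 = l^2 / (qrt l v)^3 := by
    rw [div_eq_div_iff (by positivity) (by positivity)]
    simp only [id]
    field_simp
    linear_combination hsq
  rw [← key]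
  exact hdiv

/-- Intermediate estimate obtained by splitting `[0,d]` into `M_h` and `Λ_h`:
for every `a > 0` and `l > 0`, `∫₀^d |ψ'| · 𝟙{|ψ| < a} dz ≤ dl + 4c₁da/l + 2a`. -/
theorem stmt_6 (d c₁ : ℝ) (hd : 0 < d) (hc₁ : 0 < c₁)
    (ψ ψ' ψ'' : ℝ → ℝ)
    (hψ' : ∀ z ∈ Set.Icc (0 : ℝ) d, HasDerivWithinAt ψ (ψ' z) (Set.Icc 0 d) z)
    (hψ'' : ∀ z ∈ Set.Icc (0 : ℝ) d, HasDerivWithinAt ψ' (ψ'' z) (Set.Icc 0 d) z)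
    (hψlt : ∀ z ∈ Set.Icc (0 : ℝ) d, |ψ z| < 1)
    (hψ''lt : ∀ z ∈ Set.Icc (0 : ℝ) d, |ψ'' z| < c₁)
    (a l : ℝ) (ha : 0 < a) (hl : 0 < l) :
    (∫ z in Set.Icc (0 : ℝ) d, (if |ψ z| < a then |ψ' z| else 0)) ≤
      d * l + 4 * c₁ * d * a / l + 2 * a := by
  have hd0 : (0:ℝ) ≤ d := hd.le
  set ε := min 1 (c₁ * d / l) with hεdef
  have hε0 : 0 < ε := lt_min one_pos (by positivity)
  have hε1 : ε ≤ 1 := min_le_left _ _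
  have hεc : ε * l ≤ c₁ * d := by
    have h := min_le_right 1 (c₁ * d / l)
    calc ε * l ≤ (c₁ * d / l) * l := by nlinarith
    _ = c₁ * d := by field_simp
  set c := a * (1 + ε) with hcdef
  have hac : a < c := by nlinarith
  have hc0 : 0 < c := ha.trans hac
  clear_value ε c
  -- continuity facts
  have hψcont : ContinuousOn ψ (Set.Icc 0 d) := fun z hz => (hψ' z hz).continuousWithinAt
  have hψ'cont : ContinuousOn ψ' (Set.Icc 0 d) := fun z hz => (hψ'' z hz).continuousWithinAt
  have hqcont : Continuous (fun v => qrt l v) := by unfold qrt; fun_prop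
  have hucont : Continuous (ucut l) := by
    unfold ucut
    exact continuous_id.div hqcont (fun v => (qrt_pos l v hl).ne')
  have hHcont : Continuous (Hcut a c) := by
    rw [continuous_iff_continuousAt]; exact fun t => (hasDerivAt_Hcut a c t).continuousAt
  have hhcont : Continuous (hcut a c) := continuous_hcut a c
  -- interior derivatives
  have hψdAt : ∀ z ∈ Set.Ioo (0:ℝ) d, HasDerivAt ψ (ψ' z) z := fun z hz =>
    (hψ' z (Set.Ioo_subset_Icc_self hz)).hasDerivAt (Icc_mem_nhds hz.1 hz.2)
  have hψ'dAt : ∀ z ∈ Set.Ioo (0:ℝ) d, HasDerivAt ψ' (ψ'' z) z := fun z hz =>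
    (hψ'' z (Set.Ioo_subset_Icc_self hz)).hasDerivAt (Icc_mem_nhds hz.1 hz.2)
  -- the key functions
  set G₁ : ℝ → ℝ := fun z => l^2/(qrt l (ψ' z))^3 * ψ'' z * Hcut a c (ψ z) with hG₁def
  set G₂ : ℝ → ℝ := fun z => ucut l (ψ' z) * ψ' z * hcut a c (ψ z) with hG₂def
  set F : ℝ → ℝ := fun z => ucut l (ψ' z) * Hcut a c (ψ z) with hFdef
  have hFderiv : ∀ z ∈ Set.Ioo (0:ℝ) d, HasDerivAt F (G₁ z + G₂ z) z := by
    intro z hz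
    have h1 : HasDerivAt (fun w => ucut l (ψ' w)) (l^2/(qrt l (ψ' z))^3 * ψ'' z) z :=
      (hasDerivAt_ucut l (ψ' z) hl).comp z (hψ'dAt z hz)
    have h2 : HasDerivAt (fun w => Hcut a c (ψ w)) (hcut a c (ψ z) * ψ' z) z :=
      (hasDerivAt_Hcut a c (ψ z)).comp z (hψdAt z hz)
    have h3 : HasDerivAt F (l^2/(qrt l (ψ' z))^3 * ψ'' z * Hcut a c (ψ z) +
        ucut l (ψ' z) * (hcut a c (ψ z) * ψ' z)) z := h1.mul h2
    convert h3 using 1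
    simp only [hG₁def, hG₂def]
    ring
  have hFcont : ContinuousOn F (Set.Icc 0 d) :=
    (hucont.comp_continuousOn hψ'cont).mul (hHcont.comp_continuousOn hψcont)
  have hG₂cont : ContinuousOn G₂ (Set.Icc 0 d) :=
    ((hucont.comp_continuousOn hψ'cont).mul hψ'cont).mul (hhcont.comp_continuousOn hψcont)
  have hG₂int : IntegrableOn G₂ (Set.Icc 0 d) := hG₂cont.integrableOn_compact isCompact_Icc
  -- a.e. membership in the open interval
  have hIoo_ae : ∀ᵐ z ∂(volume.restrict (Set.Icc (0:ℝ) d)), z ∈ Set.Ioo (0:ℝ) d := by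
    have h2 : ∀ᵐ z : ℝ, z ≠ 0 ∧ z ≠ d := by
      have hn : (volume : Measure ℝ) ({0, d} : Set ℝ) = 0 :=
        Set.Countable.measure_zero ((Set.countable_singleton d).insert 0) _
      rw [ae_iff]
      convert hn using 2
      ext z
      simp [not_and_or, Set.mem_insert_iff, or_comm]
      tauto
    rw [ae_restrict_iff' measurableSet_Icc]
    filter_upwards [h2] with z hz hzIcc
    exact ⟨lt_of_le_of_ne hzIcc.1 (Ne.symm hz.1), lt_of_le_of_ne hzIcc.2 hz.2⟩
  -- integrability of G₁
  have hBcont : ContinuousOn (fun z => l^2/(qrt l (ψ' z))^3 * Hcut a c (ψ z)) (Set.Icc 0 d) := by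
    apply ContinuousOn.mul _ (hHcont.comp_continuousOn hψcont)
    apply ContinuousOn.div continuousOn_const ((hqcont.comp_continuousOn hψ'cont).pow 3)
    intro z hz
    have := qrt_pos l (ψ' z) hl
    exact pow_ne_zero _ this.ne'
  have hG₁meas : AEStronglyMeasurable G₁ (volume.restrict (Set.Icc (0:ℝ) d)) := by
    have hmder : AEStronglyMeasurable
        (fun z => l^2/(qrt l (ψ' z))^3 * Hcut a c (ψ z) * deriv ψ' z)
        (volume.restrict (Set.Icc (0:ℝ) d)) :=
      (hBcont.aestronglyMeasurable measurableSet_Icc).mul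
        ((stronglyMeasurable_deriv ψ').aestronglyMeasurable.restrict)
    apply hmder.congr
    filter_upwards [hIoo_ae] with z hz
    rw [(hψ'dAt z hz).deriv]
    simp only [hG₁def]
    ring
  have hG₁bound : ∀ z ∈ Set.Icc (0:ℝ) d, ‖G₁ z‖ ≤ 1/l * c₁ * c := by
    intro z hz
    have hq := qrt_pos l (ψ' z) hl
    have hle := le_qrt l (ψ' z) hl
    have hu' : l^2/(qrt l (ψ' z))^3 ≤ 1/l := by
      rw [div_le_div_iff₀ (by positivity) hl]
      nlinarith [pow_le_pow_left₀ hl.le hle 3]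
    have hu'0 : 0 ≤ l^2/(qrt l (ψ' z))^3 := by positivity
    have hH := abs_Hcut_le a c ha hac (ψ z)
    have hψ'' := (hψ''lt z hz).le
    rw [Real.norm_eq_abs]
    simp only [hG₁def]
    rw [abs_mul, abs_mul, abs_of_nonneg hu'0]
    have h1 : |ψ'' z| * |Hcut a c (ψ z)| ≤ c₁ * c := by
      apply mul_le_mul hψ'' hH (abs_nonneg _) hc₁.le
    calc l ^ 2 / qrt l (ψ' z) ^ 3 * |ψ'' z| * |Hcut a c (ψ z)|
        = l ^ 2 / qrt l (ψ' z) ^ 3 * (|ψ'' z| * |Hcut a c (ψ z)|) := by ring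
      _ ≤ (1/l) * (c₁ * c) := by
          apply mul_le_mul hu' h1 (by positivity) (by positivity)
      _ = 1/l * c₁ * c := by ring
  have hG₁int : IntegrableOn G₁ (Set.Icc 0 d) := by
    apply Integrable.mono' (integrableOn_const (C := 1/l * c₁ * c) measure_Icc_lt_top.ne) hG₁meas
    filter_upwards [ae_restrict_mem measurableSet_Icc] with z hz using hG₁bound z hz
  -- FTC
  have hvol : (volume (Set.Icc (0:ℝ) d)).toReal = d := by
    rw [Real.volume_Icc, sub_zero, ENNReal.toReal_ofReal hd0]
  have hFTC : (∫ z in Set.Icc (0:ℝ) d, (G₁ z + G₂ z)) = F d - F 0 := by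
    have hint : IntervalIntegrable (fun z => G₁ z + G₂ z) volume 0 d := by
      rw [intervalIntegrable_iff_integrableOn_Icc_of_le hd0]
      exact hG₁int.add hG₂int
    have h := intervalIntegral.integral_eq_sub_of_hasDeriv_right_of_le hd0 hFcont
      (fun z hz => (hFderiv z hz).hasDerivWithinAt) hint
    rw [MeasureTheory.integral_Icc_eq_integral_Ioc, ← intervalIntegral.integral_of_le hd0]
    exact h
  have hsplit : (∫ z in Set.Icc (0:ℝ) d, (G₁ z + G₂ z))
      = (∫ z in Set.Icc (0:ℝ) d, G₁ z) + ∫ z in Set.Icc (0:ℝ) d, G₂ z :=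
    integral_add hG₁int hG₂int
  have hG₁intbound : |∫ z in Set.Icc (0:ℝ) d, G₁ z| ≤ (1/l * c₁ * c) * d := by
    have := norm_setIntegral_le_of_norm_le_const (μ := volume) (s := Set.Icc (0:ℝ) d)
      (f := G₁) measure_Icc_lt_top hG₁bound
    rw [Real.norm_eq_abs, measureReal_def, hvol] at this
    exact this
  have hFb : ∀ z, |F z| ≤ c := by
    intro z
    simp only [hFdef]
    rw [abs_mul]
    have hmm := mul_le_mul (abs_ucut_le_one l (ψ' z) hl) (abs_Hcut_le a c ha hac (ψ z))
      (abs_nonneg _) zero_le_one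
    linarith
  have hI2 : (∫ z in Set.Icc (0:ℝ) d, G₂ z) ≤ 2*c + (1/l * c₁ * c) * d := by
    have h1 := abs_le.1 (hFb d)
    have h2 := abs_le.1 (hFb 0)
    have h3 := abs_le.1 hG₁intbound
    linarith [hFTC, hsplit]
  -- the l * hcut integral
  have hlhcont : ContinuousOn (fun z => l * hcut a c (ψ z)) (Set.Icc 0 d) :=
    continuousOn_const.mul (hhcont.comp_continuousOn hψcont)
  have hlhint : IntegrableOn (fun z => l * hcut a c (ψ z)) (Set.Icc 0 d) :=
    hlhcont.integrableOn_compact isCompact_Icc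
  have hI1 : (∫ z in Set.Icc (0:ℝ) d, l * hcut a c (ψ z)) ≤ l * d := by
    have hb : ∀ z ∈ Set.Icc (0:ℝ) d, ‖l * hcut a c (ψ z)‖ ≤ l := by
      intro z hz
      rw [Real.norm_eq_abs, abs_mul, abs_of_pos hl, abs_of_nonneg (hcut_nonneg a c (ψ z))]
      nlinarith [hcut_le_one a c (ψ z) hac, hcut_nonneg a c (ψ z)]
    have := norm_setIntegral_le_of_norm_le_const (μ := volume) (s := Set.Icc (0:ℝ) d)
      measure_Icc_lt_top hb
    rw [Real.norm_eq_abs, measureReal_def, hvol] at this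
    exact (le_abs_self _).trans this
  -- pointwise comparison
  have hmain : (∫ z in Set.Icc (0 : ℝ) d, (if |ψ z| < a then |ψ' z| else 0))
      ≤ ∫ z in Set.Icc (0:ℝ) d, (l * hcut a c (ψ z) + G₂ z) := by
    apply integral_mono_of_nonneg
    · filter_upwards with z
      split_ifs
      exacts [abs_nonneg _, le_rfl]
    · exact hlhint.add hG₂int
    · filter_upwards [ae_restrict_mem measurableSet_Icc] with z hz
      by_cases hca : |ψ z| < a
      · rw [if_pos hca]
        simp only [hG₂def]
        rw [hcut_eq_one a c (ψ z) ha hac hca]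
        have := abs_le_add_ucut_mul l (ψ' z) hl
        linarith
      · rw [if_neg hca]
        have h1 := hcut_nonneg a c (ψ z)
        have h2 := ucut_mul_nonneg l (ψ' z) hl
        simp only [hG₂def]
        have : 0 ≤ ucut l (ψ' z) * ψ' z * hcut a c (ψ z) := mul_nonneg h2 h1
        nlinarith
  have hgadd : (∫ z in Set.Icc (0:ℝ) d, (l * hcut a c (ψ z) + G₂ z))
      = (∫ z in Set.Icc (0:ℝ) d, l * hcut a c (ψ z)) + ∫ z in Set.Icc (0:ℝ) d, G₂ z :=
    integral_add hlhint hG₂int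
  -- final arithmetic
  have hfinal : l * d + (2*c + (1/l * c₁ * c) * d) ≤ d * l + 4 * c₁ * d * a / l + 2 * a := by
    have hli : (0:ℝ) < l⁻¹ := by positivity
    have hε' : ε ≤ c₁ * d * l⁻¹ := by
      rw [← div_eq_mul_inv]
      exact (le_div_iff₀ hl).2 hεc
    have e1 : 4 * c₁ * d * a / l = 4 * c₁ * d * a * l⁻¹ := by rw [div_eq_mul_inv]
    have e2 : (1/l * c₁ * c) * d = c₁ * c * d * l⁻¹ := by rw [one_div]; ring
    rw [e1, e2, hcdef]
    have t1 : 2 * a * ε ≤ 2 * a * (c₁ * d * l⁻¹) := by nlinarith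
    have t2 : c₁ * (a * (1 + ε)) * d * l⁻¹ ≤ 2 * (c₁ * a * d * l⁻¹) := by
      have h0 : (0:ℝ) ≤ c₁ * a * d * l⁻¹ := by positivity
      nlinarith [h0, hε1]
    linarith [t1, t2]
  calc (∫ z in Set.Icc (0 : ℝ) d, (if |ψ z| < a then |ψ' z| else 0))
      ≤ ∫ z in Set.Icc (0:ℝ) d, (l * hcut a c (ψ z) + G₂ z) := hmain
    _ = (∫ z in Set.Icc (0:ℝ) d, l * hcut a c (ψ z)) + ∫ z in Set.Icc (0:ℝ) d, G₂ z := hgadd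
    _ ≤ l * d + (2*c + (1/l * c₁ * c) * d) := by linarith
    _ ≤ d * l + 4 * c₁ * d * a / l + 2 * a := hfinal
end

section
/- Let d > 0, c₁ > 0, and let ψ : [0,d] → ℝ be twice differentiable with |ψ(z)| < 1 and |ψ''(z)| < c₁ for all z ∈ [0,d]. Let c₂ = d·(1 + 4c₁) + 2. Then for every integer k ≥ 1, every partition 0 < κ₁ < κ₂ < ... < κ_{k+1} ≤ 1, and every r with 1 ≤ r ≤ k, one has ∑_{ν=1}^r ∫₀^d |ψ'(z)| · 𝟙{κ_ν ≤ |ψ(z)| < κ_{ν+1}} dz < c₂ · √(κ_{r+1}). -/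
open MeasureTheory


open MeasureTheory Set intervalIntegral

section moll
variable (b δ : ℝ)

noncomputable def Gm (t : ℝ) : ℝ := min 1 (max 0 ((δ - |t|) / (δ - b)))
noncomputable def Fm (t : ℝ) : ℝ := ∫ s in (0:ℝ)..t, Gm b δ s

variable (hb : 0 < b) (hδ : b < δ)

lemma Gm_cont : Continuous (Gm b δ) := by
  unfold Gm
  fun_prop

lemma Gm_nonneg (t : ℝ) : 0 ≤ Gm b δ t := le_min zero_le_one (le_max_left _ _)

lemma Gm_le_one (t : ℝ) : Gm b δ t ≤ 1 := min_le_left _ _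

include hδ in
lemma Gm_eq_one {t : ℝ} (ht : |t| ≤ b) : Gm b δ t = 1 := by
  unfold Gm
  have h1 : (1:ℝ) ≤ (δ - |t|) / (δ - b) := by
    rw [le_div_iff₀ (by linarith)]
    linarith
  rw [max_eq_right (by linarith), min_eq_left h1]

include hδ in
lemma Gm_eq_zero {t : ℝ} (ht : δ ≤ |t|) : Gm b δ t = 0 := by
  unfold Gm
  have : (δ - |t|) / (δ - b) ≤ 0 := div_nonpos_of_nonpos_of_nonneg (by linarith) (by linarith)
  rw [max_eq_left this, min_eq_right zero_le_one]

include hδ in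
lemma Fm_hasDeriv (t : ℝ) : HasDerivAt (Fm b δ) (Gm b δ t) t := by
  apply intervalIntegral.integral_hasDerivAt_right
    ((Gm_cont b δ).intervalIntegrable _ _)
    ((Gm_cont b δ).stronglyMeasurableAtFilter _ _)
    (Gm_cont b δ).continuousAt

include hb hδ in
lemma Fm_abs_le (t : ℝ) : |Fm b δ t| ≤ δ := by
  have hδ0 : 0 < δ := lt_trans hb hδ
  have key : ∀ u : ℝ, |u| ≤ δ → |Fm b δ u| ≤ δ := by
    intro u hu
    unfold Fm
    have := intervalIntegral.norm_integral_le_of_norm_le_const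
      (C := 1) (f := Gm b δ) (a := 0) (b := u) ?bound
    · rw [Real.norm_eq_abs] at this
      calc |∫ s in (0:ℝ)..u, Gm b δ s| ≤ 1 * |u - 0| := this
        _ = |u| := by rw [one_mul, sub_zero]
        _ ≤ δ := hu
    case bound =>
      intro x _
      rw [Real.norm_eq_abs, abs_of_nonneg (Gm_nonneg b δ x)]
      exact Gm_le_one b δ x
  rcases le_or_gt (|t|) δ with h | h
  · exact key t h
  · rcases le_or_gt 0 t with h0 | h0
    · have hδt : δ ≤ t := by rw [abs_of_nonneg h0] at h; linarith
      have split : Fm b δ t = Fm b δ δ + ∫ s in δ..t, Gm b δ s := by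
        unfold Fm
        rw [intervalIntegral.integral_add_adjacent_intervals
          ((Gm_cont b δ).intervalIntegrable _ _) ((Gm_cont b δ).intervalIntegrable _ _)]
      have hz : (∫ s in δ..t, Gm b δ s) = 0 := by
        rw [show (0:ℝ) = ∫ s in δ..t, (0:ℝ) by simp]
        apply intervalIntegral.integral_congr
        intro x hx
        rw [Set.uIcc_of_le hδt] at hx
        exact Gm_eq_zero b δ hδ (le_trans (le_trans hx.1 (le_abs_self x)) le_rfl)
      rw [split, hz, add_zero]
      exact key δ (by rw [abs_of_pos hδ0])
    · have hδt : t ≤ -δ := by rw [abs_of_neg h0] at h; linarith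
      have split : Fm b δ (-δ) = Fm b δ t + ∫ s in t..(-δ), Gm b δ s := by
        unfold Fm
        rw [intervalIntegral.integral_add_adjacent_intervals
          ((Gm_cont b δ).intervalIntegrable _ _) ((Gm_cont b δ).intervalIntegrable _ _)]
      have hz : (∫ s in t..(-δ), Gm b δ s) = 0 := by
        rw [show (0:ℝ) = ∫ s in t..(-δ), (0:ℝ) by simp]
        apply intervalIntegral.integral_congr
        intro x hx
        rw [Set.uIcc_of_le hδt] at hx
        apply Gm_eq_zero b δ hδ
        have : x ≤ -δ := hx.2
        rw [abs_of_nonpos (by linarith)]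
        linarith
      have : Fm b δ t = Fm b δ (-δ) := by rw [split, hz, add_zero]
      rw [this]
      exact key (-δ) (by rw [abs_neg, abs_of_pos hδ0])
end moll
lemma deriv_bd (d c₁ : ℝ) (hd : 0 < d) (hc₁ : 0 < c₁)
    (ψ ψ' ψ'' : ℝ → ℝ)
    (hψ' : ∀ z ∈ Set.Icc (0 : ℝ) d, HasDerivWithinAt ψ (ψ' z) (Set.Icc 0 d) z)
    (hψ'' : ∀ z ∈ Set.Icc (0 : ℝ) d, HasDerivWithinAt ψ' (ψ'' z) (Set.Icc 0 d) z)
    (hψlt : ∀ z ∈ Set.Icc (0 : ℝ) d, |ψ z| < 1)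
    (hψ''lt : ∀ z ∈ Set.Icc (0 : ℝ) d, |ψ'' z| < c₁) :
    ∀ z ∈ Set.Icc (0 : ℝ) d, |ψ' z| ≤ 2 / d + c₁ * d := by
  have hcont : ContinuousOn ψ (Set.Icc 0 d) := fun z hz => (hψ' z hz).continuousWithinAt
  have hder : ∀ x ∈ Set.Ioo (0:ℝ) d, HasDerivAt ψ (ψ' x) x := by
    intro x hx
    exact (hψ' x (Set.Ioo_subset_Icc_self hx)).hasDerivAt (Icc_mem_nhds hx.1 hx.2)
  obtain ⟨ξ, hξ, hslope⟩ := exists_hasDerivAt_eq_slope ψ ψ' hd hcont hder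
  have hξI : ξ ∈ Set.Icc (0:ℝ) d := Set.Ioo_subset_Icc_self hξ
  have hξbd : |ψ' ξ| ≤ 2 / d := by
    rw [hslope]
    rw [abs_div]
    rw [abs_of_pos (by linarith : (0:ℝ) < d - 0)]
    have h1 := hψlt d (by constructor <;> linarith)
    have h2 := hψlt 0 (by constructor <;> linarith)
    have : |ψ d - ψ 0| ≤ 2 := by
      calc |ψ d - ψ 0| ≤ |ψ d| + |ψ 0| := abs_sub _ _
        _ ≤ 2 := by linarith
    rw [sub_zero]
    gcongr
  intro z hz
  have hlip : ‖ψ' z - ψ' ξ‖ ≤ c₁ * ‖z - ξ‖ := by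
    apply Convex.norm_image_sub_le_of_norm_hasDerivWithin_le
      (fun x hx => hψ'' x hx) (fun x hx => le_of_lt (hψ''lt x hx)) (convex_Icc 0 d) hξI hz
  have hzd : ‖z - ξ‖ ≤ d := by
    rw [Real.norm_eq_abs, abs_sub_le_iff]
    constructor <;> [skip; skip] <;> cases' hz with h1 h2 <;> cases' hξI with h3 h4 <;> linarith
  have : |ψ' z| ≤ |ψ' ξ| + c₁ * d := by
    have := abs_sub_abs_le_abs_sub (ψ' z) (ψ' ξ)
    have h4 : c₁ * ‖z - ξ‖ ≤ c₁ * d := by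
      apply mul_le_mul_of_nonneg_left hzd (le_of_lt hc₁)
    rw [Real.norm_eq_abs] at hlip
    linarith
  linarith

lemma energy (d c₁ b δ : ℝ) (hd : 0 < d) (hc₁ : 0 < c₁) (hb : 0 < b) (hδ : b < δ)
    (ψ ψ' ψ'' : ℝ → ℝ)
    (hψ' : ∀ z ∈ Set.Icc (0 : ℝ) d, HasDerivWithinAt ψ (ψ' z) (Set.Icc 0 d) z)
    (hψ'' : ∀ z ∈ Set.Icc (0 : ℝ) d, HasDerivWithinAt ψ' (ψ'' z) (Set.Icc 0 d) z)
    (hψlt : ∀ z ∈ Set.Icc (0 : ℝ) d, |ψ z| < 1)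
    (hψ''lt : ∀ z ∈ Set.Icc (0 : ℝ) d, |ψ'' z| < c₁) :
    ∫ z in Set.Icc (0:ℝ) d, Gm b δ (ψ z) * ψ' z ^ 2
      ≤ 2 * δ * (2 / d + c₁ * d) + δ * c₁ * d := by
  have hM := deriv_bd d c₁ hd hc₁ ψ ψ' ψ'' hψ' hψ'' hψlt hψ''lt
  have hδ0 : 0 < δ := lt_trans hb hδ
  have hFd : Differentiable ℝ (Fm b δ) := fun t => (Fm_hasDeriv b δ hδ t).differentiableAt
  have hFc : Continuous (Fm b δ) := hFd.continuous
  have hcontψ : ContinuousOn ψ (Set.Icc 0 d) := fun z hz => (hψ' z hz).continuousWithinAt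
  have hcontψ' : ContinuousOn ψ' (Set.Icc 0 d) := fun z hz => (hψ'' z hz).continuousWithinAt
  set Φ : ℝ → ℝ := fun z => Fm b δ (ψ z) * ψ' z + δ * c₁ * z with hΦ
  have hΦcont : ContinuousOn Φ (Set.Icc 0 d) :=
    ((hFc.comp_continuousOn hcontψ).mul hcontψ').add (continuousOn_const.mul continuousOn_id)
  set Φ' : ℝ → ℝ := fun z =>
    Gm b δ (ψ z) * ψ' z * ψ' z + Fm b δ (ψ z) * ψ'' z + δ * c₁ with hΦ'
  have hΦderiv : ∀ x ∈ Set.Ioo (0:ℝ) d, HasDerivWithinAt Φ (Φ' x) (Set.Ioi x) x := by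
    intro x hx
    have hmem : Set.Icc (0:ℝ) d ∈ nhds x := Icc_mem_nhds hx.1 hx.2
    have hψat : HasDerivAt ψ (ψ' x) x := (hψ' x (Set.Ioo_subset_Icc_self hx)).hasDerivAt hmem
    have hψ'at : HasDerivAt ψ' (ψ'' x) x := (hψ'' x (Set.Ioo_subset_Icc_self hx)).hasDerivAt hmem
    have hcomp : HasDerivAt (fun z => Fm b δ (ψ z)) (Gm b δ (ψ x) * ψ' x) x :=
      (Fm_hasDeriv b δ hδ (ψ x)).comp x hψat
    have hprod := hcomp.mul hψ'at
    have hlin : HasDerivAt (fun z : ℝ => δ * c₁ * z) (δ * c₁) x := by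
      simpa using (hasDerivAt_id x).const_mul (δ * c₁)
    exact ((hprod.add hlin).hasDerivWithinAt)
  set φ : ℝ → ℝ := fun z => Gm b δ (ψ z) * ψ' z ^ 2 with hφ
  have hφcont : ContinuousOn φ (Set.Icc 0 d) :=
    ((Gm_cont b δ).comp_continuousOn hcontψ).mul (hcontψ'.pow 2)
  have hφint : IntegrableOn φ (Set.Icc 0 d) := hφcont.integrableOn_Icc
  have hφle : ∀ x ∈ Set.Ioo (0:ℝ) d, φ x ≤ Φ' x := by
    intro x hx
    have hxI : x ∈ Set.Icc (0:ℝ) d := Set.Ioo_subset_Icc_self hx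
    have h1 : |Fm b δ (ψ x) * ψ'' x| ≤ δ * c₁ := by
      rw [abs_mul]
      exact mul_le_mul (Fm_abs_le b δ hb hδ (ψ x)) (le_of_lt (hψ''lt x hxI))
        (abs_nonneg _) (le_of_lt hδ0)
    have h2 : -(δ * c₁) ≤ Fm b δ (ψ x) * ψ'' x := neg_le_of_abs_le h1
    simp only [hφ, hΦ']
    nlinarith [sq_nonneg (ψ' x)]
  have hFTC : (∫ y in (0:ℝ)..d, φ y) ≤ Φ d - Φ 0 :=
    intervalIntegral.integral_le_sub_of_hasDeriv_right_of_le hd.le hΦcont hΦderiv hφint hφle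
  have heq : (∫ z in Set.Icc (0:ℝ) d, φ z) = ∫ y in (0:ℝ)..d, φ y := by
    rw [intervalIntegral.integral_of_le hd.le, MeasureTheory.integral_Icc_eq_integral_Ioc]
  have hbd : Φ d - Φ 0 ≤ 2 * δ * (2 / d + c₁ * d) + δ * c₁ * d := by
    have h0I : (0:ℝ) ∈ Set.Icc (0:ℝ) d := by constructor <;> linarith
    have hdI : d ∈ Set.Icc (0:ℝ) d := by constructor <;> linarith
    have e1 : |Fm b δ (ψ d) * ψ' d| ≤ δ * (2 / d + c₁ * d) := by
      rw [abs_mul]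
      exact mul_le_mul (Fm_abs_le b δ hb hδ (ψ d)) (hM d hdI) (abs_nonneg _) (le_of_lt hδ0)
    have e2 : |Fm b δ (ψ 0) * ψ' 0| ≤ δ * (2 / d + c₁ * d) := by
      rw [abs_mul]
      exact mul_le_mul (Fm_abs_le b δ hb hδ (ψ 0)) (hM 0 h0I) (abs_nonneg _) (le_of_lt hδ0)
    obtain ⟨e1l, e1r⟩ := abs_le.1 e1
    obtain ⟨e2l, e2r⟩ := abs_le.1 e2
    simp only [hΦ]
    linarith
  calc (∫ z in Set.Icc (0:ℝ) d, φ z) = ∫ y in (0:ℝ)..d, φ y := heq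
    _ ≤ Φ d - Φ 0 := hFTC
    _ ≤ _ := hbd

open MeasureTheory Set

lemma integ_ite (d M a c : ℝ) (ψ ψ' : ℝ → ℝ)
    (hcψ : ContinuousOn ψ (Set.Icc 0 d)) (hcψ' : ContinuousOn ψ' (Set.Icc 0 d))
    (hM : ∀ z ∈ Set.Icc (0:ℝ) d, |ψ' z| ≤ M) :
    IntegrableOn (fun z => if a ≤ |ψ z| ∧ |ψ z| < c then |ψ' z| else 0) (Set.Icc 0 d) := by
  obtain ⟨g, hg, hge⟩ := hcψ.aemeasurable measurableSet_Icc
  obtain ⟨g', hg', hg'e⟩ := hcψ'.aemeasurable measurableSet_Icc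
  have hmeas : Measurable fun z => if a ≤ |g z| ∧ |g z| < c then |g' z| else 0 := by
    apply Measurable.ite _ hg'.abs measurable_const
    exact MeasurableSet.inter (measurableSet_le measurable_const hg.abs)
      (measurableSet_lt hg.abs measurable_const)
  have heq : (fun z => if a ≤ |ψ z| ∧ |ψ z| < c then |ψ' z| else 0)
      =ᵐ[volume.restrict (Set.Icc (0:ℝ) d)]
      (fun z => if a ≤ |g z| ∧ |g z| < c then |g' z| else 0) := by
    filter_upwards [hge, hg'e] with z h1 h2
    rw [h1, h2]
  refine Integrable.mono' (g := fun _ => |M|) ?_ ?_ ?_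
  · exact integrableOn_const measure_Icc_lt_top.ne
  · exact hmeas.aestronglyMeasurable.congr heq.symm
  · filter_upwards [ae_restrict_mem measurableSet_Icc] with z hz
    by_cases hcond : a ≤ |ψ z| ∧ |ψ z| < c
    · simp only [if_pos hcond, Real.norm_eq_abs, abs_abs]
      exact le_trans (hM z hz) (le_abs_self M)
    · simp only [if_neg hcond, norm_zero]
      exact abs_nonneg M

lemma integ_ind (d c : ℝ) (ψ : ℝ → ℝ)
    (hcψ : ContinuousOn ψ (Set.Icc 0 d)) :
    IntegrableOn (fun z => if |ψ z| < c then (1:ℝ) else 0) (Set.Icc 0 d) := by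
  obtain ⟨g, hg, hge⟩ := hcψ.aemeasurable measurableSet_Icc
  have hmeas : Measurable fun z => if |g z| < c then (1:ℝ) else 0 := by
    apply Measurable.ite _ measurable_const measurable_const
    exact measurableSet_lt hg.abs measurable_const
  have heq : (fun z => if |ψ z| < c then (1:ℝ) else 0)
      =ᵐ[volume.restrict (Set.Icc (0:ℝ) d)]
      (fun z => if |g z| < c then (1:ℝ) else 0) := by
    filter_upwards [hge] with z h1
    rw [h1]
  refine Integrable.mono' (g := fun _ => (1:ℝ)) ?_ ?_ ?_
  · exact integrableOn_const measure_Icc_lt_top.ne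
  · exact hmeas.aestronglyMeasurable.congr heq.symm
  · filter_upwards [] with z
    by_cases hcond : |ψ z| < c
    · simp [if_pos hcond]
    · simp [if_neg hcond]

open MeasureTheory

lemma kappa_mono (κ : ℕ → ℝ) (k : ℕ)
    (hκmono : ∀ ν ∈ Finset.Icc 1 k, κ ν < κ (ν + 1)) :
    ∀ i j, 1 ≤ i → i ≤ j → j ≤ k + 1 → κ i ≤ κ j := by
  intro i j hi hij hjk
  induction j with
  | zero => omega
  | succ n ih =>
    rcases Nat.eq_or_lt_of_le hij with h | h
    · rw [h]
    · have hn : i ≤ n := by omega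
      have h1n : 1 ≤ n := le_trans hi hn
      refine le_trans (ih hn (by omega)) (le_of_lt (hκmono n ?_))
      simp [Finset.mem_Icc]; omega

lemma sum_ite_le (κ : ℕ → ℝ) (k : ℕ)
    (hκmono : ∀ ν ∈ Finset.Icc 1 k, κ ν < κ (ν + 1)) (t A : ℝ) (hA : 0 ≤ A) :
    ∀ r, 1 ≤ r → r ≤ k →
      (∑ ν ∈ Finset.Icc 1 r, if κ ν ≤ t ∧ t < κ (ν + 1) then A else 0)
        ≤ if t < κ (r + 1) then A else 0 := by
  intro r
  induction r with
  | zero => omega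
  | succ n ih =>
    intro _ hle
    rcases Nat.eq_zero_or_pos n with rfl | hn
    · simp only [Finset.Icc_self, Finset.sum_singleton]
      by_cases h : κ 1 ≤ t ∧ t < κ 2
      · simp [h, h.2]
      · simp only [if_neg h]
        positivity
    · rw [Finset.sum_Icc_succ_top (by omega : 1 ≤ n + 1)]
      have hsum := ih hn (by omega)
      by_cases hc : κ (n + 1) ≤ t ∧ t < κ (n + 1 + 1)
      · have h0 : ¬ (t < κ (n + 1)) := not_lt.2 hc.1
        rw [if_neg h0] at hsum
        have hnn : (0:ℝ) ≤ ∑ ν ∈ Finset.Icc 1 n, if κ ν ≤ t ∧ t < κ (ν + 1) then A else 0 := by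
          apply Finset.sum_nonneg; intro i _; positivity
        have : (∑ ν ∈ Finset.Icc 1 n, if κ ν ≤ t ∧ t < κ (ν + 1) then A else 0) = 0 :=
          le_antisymm hsum hnn
        rw [this, if_pos hc, zero_add, if_pos hc.2]
      · rw [if_neg hc, add_zero]
        refine le_trans hsum ?_
        have hk1 : κ (n + 1) < κ (n + 1 + 1) := hκmono (n+1) (by simp [Finset.mem_Icc]; omega)
        by_cases ht : t < κ (n + 1)
        · rw [if_pos ht, if_pos (lt_trans ht hk1)]
        · rw [if_neg ht]; positivity

set_option maxHeartbeats 1000000 in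
/-- The partial sums `(Δψ)₁ + ⋯ + (Δψ)_r` are dominated by `c₂ √κ_{r+1}`: for any partition
`0 < κ₁ < ⋯ < κ_{k+1} ≤ 1` and any `1 ≤ r ≤ k`,
`∑_{ν=1}^r ∫₀^d |ψ'| · 𝟙{κ_ν ≤ |ψ| < κ_{ν+1}} dz < (d(1+4c₁)+2) √κ_{r+1}`. -/
theorem stmt_10 (d c₁ : ℝ) (hd : 0 < d) (hc₁ : 0 < c₁)
    (ψ ψ' ψ'' : ℝ → ℝ)
    (hψ' : ∀ z ∈ Set.Icc (0 : ℝ) d, HasDerivWithinAt ψ (ψ' z) (Set.Icc 0 d) z)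
    (hψ'' : ∀ z ∈ Set.Icc (0 : ℝ) d, HasDerivWithinAt ψ' (ψ'' z) (Set.Icc 0 d) z)
    (hψlt : ∀ z ∈ Set.Icc (0 : ℝ) d, |ψ z| < 1)
    (hψ''lt : ∀ z ∈ Set.Icc (0 : ℝ) d, |ψ'' z| < c₁)
    (k : ℕ) (hk : 1 ≤ k) (κ : ℕ → ℝ)
    (hκ1 : 0 < κ 1)
    (hκmono : ∀ ν ∈ Finset.Icc 1 k, κ ν < κ (ν + 1))
    (hκtop : κ (k + 1) ≤ 1)
    (r : ℕ) (hr : r ∈ Finset.Icc 1 k) :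
    (∑ ν ∈ Finset.Icc 1 r,
        ∫ z in Set.Icc (0 : ℝ) d,
          (if κ ν ≤ |ψ z| ∧ |ψ z| < κ (ν + 1) then |ψ' z| else 0)) <
      (d * (1 + 4 * c₁) + 2) * Real.sqrt (κ (r + 1)) := by
  obtain ⟨hr1, hrk⟩ := Finset.mem_Icc.1 hr
  have hmono := kappa_mono κ k hκmono
  set b := κ (r + 1) with hbdef
  have hb0 : 0 < b := lt_of_lt_of_le hκ1 (hmono 1 (r+1) le_rfl (by omega) (by omega))
  have hb1 : b ≤ 1 := le_trans (hmono (r+1) (k+1) (by omega) (by omega) le_rfl) hκtop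
  -- constants
  set ε : ℝ := d / (1 + c₁ * d ^ 2) with hεdef
  have hden : (0:ℝ) < 1 + c₁ * d ^ 2 := by positivity
  have hε : 0 < ε := div_pos hd hden
  set δ : ℝ := b * (1 + ε) with hδdef
  have hδb : b < δ := by
    have : b * 1 < b * (1 + ε) := by nlinarith
    simpa using this
  have hδ0 : 0 < δ := lt_trans hb0 hδb
  set M : ℝ := 2 / d + c₁ * d with hMdef
  have hM0 : 0 < M := by positivity
  set Bv : ℝ := δ * (2 * M + c₁ * d) with hBvdef
  have hBv0 : 0 < Bv := by positivity
  set lam : ℝ := Real.sqrt (Bv / d) with hlamdef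
  have hlam0 : 0 < lam := Real.sqrt_pos.2 (by positivity)
  have hlam2 : lam ^ 2 = Bv / d := Real.sq_sqrt (by positivity)
  -- continuity
  have hcontψ : ContinuousOn ψ (Set.Icc 0 d) := fun z hz => (hψ' z hz).continuousWithinAt
  have hcontψ' : ContinuousOn ψ' (Set.Icc 0 d) := fun z hz => (hψ'' z hz).continuousWithinAt
  have hMbd := deriv_bd d c₁ hd hc₁ ψ ψ' ψ'' hψ' hψ'' hψlt hψ''lt
  -- the comparison function
  set h : ℝ → ℝ := fun z =>
    (1 / (2 * lam)) * (Gm b δ (ψ z) * ψ' z ^ 2)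
      + (lam / 2) * (if |ψ z| < b then 1 else 0) with hhdef
  -- pointwise bound
  have hpt : ∀ z ∈ Set.Icc (0:ℝ) d,
      (∑ ν ∈ Finset.Icc 1 r, if κ ν ≤ |ψ z| ∧ |ψ z| < κ (ν + 1) then |ψ' z| else 0)
        ≤ h z := by
    intro z _
    refine le_trans (sum_ite_le κ k hκmono (|ψ z|) (|ψ' z|) (abs_nonneg _) r hr1 hrk) ?_
    by_cases hcase : |ψ z| < b
    · rw [if_pos hcase]
      have hG1 : Gm b δ (ψ z) = 1 := Gm_eq_one b δ hδb (le_of_lt hcase)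
      simp only [hhdef, hG1, if_pos hcase, one_mul, mul_one]
      have h1 : 2 * lam * |ψ' z| ≤ ψ' z ^ 2 + lam ^ 2 := by
        nlinarith [sq_nonneg (|ψ' z| - lam), sq_abs (ψ' z)]
      have h2 : (0:ℝ) ≤ (ψ' z ^ 2 + lam ^ 2 - 2 * lam * |ψ' z|) / (2 * lam) :=
        div_nonneg (by linarith) (by linarith)
      have h3 : (ψ' z ^ 2 + lam ^ 2 - 2 * lam * |ψ' z|) / (2 * lam)
          = 1 / (2 * lam) * ψ' z ^ 2 + lam / 2 - |ψ' z| := by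
        field_simp
      linarith
    · rw [if_neg hcase]
      simp only [hhdef, if_neg hcase, mul_zero, add_zero]
      have := Gm_nonneg b δ (ψ z)
      positivity
  -- integrability of summands
  have hint : ∀ ν ∈ Finset.Icc 1 r, IntegrableOn
      (fun z => if κ ν ≤ |ψ z| ∧ |ψ z| < κ (ν + 1) then |ψ' z| else 0) (Set.Icc 0 d) :=
    fun ν _ => integ_ite d M (κ ν) (κ (ν+1)) ψ ψ' hcontψ hcontψ' hMbd
  have hGint : IntegrableOn (fun z => Gm b δ (ψ z) * ψ' z ^ 2) (Set.Icc 0 d) :=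
    (((Gm_cont b δ).comp_continuousOn hcontψ).mul (hcontψ'.pow 2)).integrableOn_Icc
  have hindint : IntegrableOn (fun z => if |ψ z| < b then (1:ℝ) else 0) (Set.Icc 0 d) :=
    integ_ind d b ψ hcontψ
  have hhint : IntegrableOn h (Set.Icc 0 d) :=
    (hGint.const_mul _).add (hindint.const_mul _)
  -- swap sum and integral
  have hswap : (∑ ν ∈ Finset.Icc 1 r, ∫ z in Set.Icc (0:ℝ) d,
        (if κ ν ≤ |ψ z| ∧ |ψ z| < κ (ν + 1) then |ψ' z| else 0))
      = ∫ z in Set.Icc (0:ℝ) d, (∑ ν ∈ Finset.Icc 1 r,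
          if κ ν ≤ |ψ z| ∧ |ψ z| < κ (ν + 1) then |ψ' z| else 0) :=
    (integral_finset_sum _ hint).symm
  have hsumint : IntegrableOn (fun z => ∑ ν ∈ Finset.Icc 1 r,
      if κ ν ≤ |ψ z| ∧ |ψ z| < κ (ν + 1) then |ψ' z| else 0) (Set.Icc 0 d) :=
    integrable_finset_sum _ hint
  have hmono2 : (∫ z in Set.Icc (0:ℝ) d, (∑ ν ∈ Finset.Icc 1 r,
        if κ ν ≤ |ψ z| ∧ |ψ z| < κ (ν + 1) then |ψ' z| else 0))
      ≤ ∫ z in Set.Icc (0:ℝ) d, h z :=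
    setIntegral_mono_on hsumint hhint measurableSet_Icc hpt
  -- compute integral of h
  have hsplit : (∫ z in Set.Icc (0:ℝ) d, h z)
      = (1 / (2 * lam)) * (∫ z in Set.Icc (0:ℝ) d, Gm b δ (ψ z) * ψ' z ^ 2)
        + (lam / 2) * (∫ z in Set.Icc (0:ℝ) d, if |ψ z| < b then (1:ℝ) else 0) := by
    rw [integral_add (hGint.const_mul _) (hindint.const_mul _),
      MeasureTheory.integral_const_mul, MeasureTheory.integral_const_mul]
  have hEnergy := energy d c₁ b δ hd hc₁ hb0 hδb ψ ψ' ψ'' hψ' hψ'' hψlt hψ''lt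
  have hEnergy' : (∫ z in Set.Icc (0:ℝ) d, Gm b δ (ψ z) * ψ' z ^ 2) ≤ Bv := by
    have : 2 * δ * (2 / d + c₁ * d) + δ * c₁ * d = Bv := by rw [hBvdef, hMdef]; ring
    linarith
  have hindbd : (∫ z in Set.Icc (0:ℝ) d, if |ψ z| < b then (1:ℝ) else 0) ≤ d := by
    have h1 : (∫ z in Set.Icc (0:ℝ) d, if |ψ z| < b then (1:ℝ) else 0)
        ≤ ∫ _ in Set.Icc (0:ℝ) d, (1:ℝ) := by
      apply setIntegral_mono_on hindint (integrableOn_const measure_Icc_lt_top.ne)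
        measurableSet_Icc
      intro z _
      by_cases hc : |ψ z| < b
      · rw [if_pos hc]
      · rw [if_neg hc]; norm_num
    have h2 : (∫ _ in Set.Icc (0:ℝ) d, (1:ℝ)) = d := by
      rw [setIntegral_const, measureReal_def, Real.volume_Icc, smul_eq_mul, mul_one,
        ENNReal.toReal_ofReal (by linarith)]
      ring
    linarith
  have htot : (∫ z in Set.Icc (0:ℝ) d, h z) ≤ lam * d := by
    rw [hsplit]
    have t1 : (1 / (2 * lam)) * (∫ z in Set.Icc (0:ℝ) d, Gm b δ (ψ z) * ψ' z ^ 2)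
        ≤ (1 / (2 * lam)) * Bv :=
      mul_le_mul_of_nonneg_left hEnergy' (by positivity)
    have t2 : (lam / 2) * (∫ z in Set.Icc (0:ℝ) d, if |ψ z| < b then (1:ℝ) else 0)
        ≤ (lam / 2) * d :=
      mul_le_mul_of_nonneg_left hindbd (by positivity)
    have hBveq : Bv = lam ^ 2 * d := by
      rw [hlam2]
      field_simp
    have : (1 / (2 * lam)) * Bv + (lam / 2) * d = lam * d := by
      rw [hBveq]
      field_simp
      ring
    linarith
  -- final numeric bound
  have hfin : lam * d < (d * (1 + 4 * c₁) + 2) * Real.sqrt b := by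
    have hlamd : lam * d = Real.sqrt (Bv * d) := by
      rw [hlamdef, ← Real.sqrt_sq hd.le, ← Real.sqrt_mul (by positivity)]
      congr 1
      field_simp
      rw [Real.sq_sqrt (sq_nonneg d)]
    have hfactor : Bv * d = b * ((1 + ε) * (2 * M + c₁ * d) * d) := by
      rw [hBvdef, hδdef]; ring
    have hsqrtsplit : Real.sqrt (Bv * d)
        = Real.sqrt b * Real.sqrt ((1 + ε) * (2 * M + c₁ * d) * d) := by
      rw [hfactor, Real.sqrt_mul hb0.le]
    have hc₂ : (0:ℝ) < d * (1 + 4 * c₁) + 2 := by positivity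
    have hkey : (1 + ε) * (2 * M + c₁ * d) * d < (d * (1 + 4 * c₁) + 2) ^ 2 := by
      rw [hεdef, hMdef]
      have hd' : d ≠ 0 := ne_of_gt hd
      have hLHS : (1 + d / (1 + c₁ * d ^ 2)) * (2 * (2 / d + c₁ * d) + c₁ * d) * d
          = (1 + c₁ * d ^ 2 + d) * (4 + 3 * c₁ * d ^ 2) / (1 + c₁ * d ^ 2) := by
        field_simp
        ring
      rw [hLHS, div_lt_iff₀ hden]
      nlinarith [mul_pos hc₁ hd, mul_pos hd hd, mul_pos (mul_pos hc₁ hd) hd,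
        mul_pos (mul_pos hc₁ hd) (mul_pos hc₁ hd),
        mul_pos (mul_pos (mul_pos hc₁ hd) hd) hd,
        mul_pos (mul_pos hc₁ hd) (mul_pos hd hd),
        mul_pos (mul_pos (mul_pos hc₁ hd) (mul_pos hc₁ hd)) hd,
        mul_pos (mul_pos (mul_pos hc₁ hd) (mul_pos hc₁ hd)) (mul_pos hd hd),
        mul_pos (mul_pos (mul_pos hc₁ hd) (mul_pos hc₁ hd)) (mul_pos (mul_pos hc₁ hd) hd),
        mul_pos (mul_pos hc₁ (mul_pos hd hd)) (mul_pos hd hd)]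
    have hsq : Real.sqrt ((1 + ε) * (2 * M + c₁ * d) * d) < d * (1 + 4 * c₁) + 2 :=
      (Real.sqrt_lt' hc₂).2 hkey
    have hsb : 0 < Real.sqrt b := Real.sqrt_pos.2 hb0
    calc lam * d = Real.sqrt b * Real.sqrt ((1 + ε) * (2 * M + c₁ * d) * d) := by
          rw [hlamd, hsqrtsplit]
      _ < Real.sqrt b * (d * (1 + 4 * c₁) + 2) := by
          exact mul_lt_mul_of_pos_left hsq hsb
      _ = (d * (1 + 4 * c₁) + 2) * Real.sqrt b := by ring
  calc (∑ ν ∈ Finset.Icc 1 r, ∫ z in Set.Icc (0:ℝ) d,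
        (if κ ν ≤ |ψ z| ∧ |ψ z| < κ (ν + 1) then |ψ' z| else 0))
      = ∫ z in Set.Icc (0:ℝ) d, (∑ ν ∈ Finset.Icc 1 r,
          if κ ν ≤ |ψ z| ∧ |ψ z| < κ (ν + 1) then |ψ' z| else 0) := hswap
    _ ≤ ∫ z in Set.Icc (0:ℝ) d, h z := hmono2
    _ ≤ lam * d := htot
    _ < (d * (1 + 4 * c₁) + 2) * Real.sqrt b := hfin
end
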